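/- Let A ∈ ℝmax^{n×n} have λ(A) ≠ −∞, and let 𝒞_1, …, 𝒞_l be the s.c.c.'s of the critical graph 𝒞(A), with node sets N_1, …, N_l. Let C, S, R be the CSR terms of A with respect to 𝒞(A). For ν = 2, …, l let A^{(ν)} be the matrix obtained from A by setting to −∞ all entries in the rows and columns indexed by N_1 ∪ ⋯ ∪ N_{ν−1}, and let C_ν, S_ν, R_ν be the CSR terms with respect to 𝒞_ν defined from A^{(ν)} with normalization by λ(A) (i.e., using M_ν = (((−λ(A))⊗A^{(ν)})^{γ(𝒞_ν)})^* and (S_ν)_{ij} = a^{(ν)}_{ij} − λ(A) on edges of 𝒞_ν); let C_1, S_1, R_1 be the CSR terms of A with respect to 𝒞_1. Then for all t ≥ 0, CS^tR = ⊕_{ν=1}^{l} C_ν S_ν^t R_ν (entrywise maximum). -/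

import Mathlib

open Classical

noncomputable section

namespace MaxPlus

/-- A square matrix over the max-plus semiring `ℝmax = ℝ ∪ {-∞}`,
represented as `WithBot ℝ` (with `⊥ = -∞`, `+` the usual addition). -/
abbrev MPMat (n : ℕ) := Fin n → Fin n → WithBot ℝ

variable {n : ℕ}

/-- Max-plus matrix multiplication: `(A⊗B)_{ij} = max_k (a_{ik} + b_{kj})`. -/
def mpMul (A B : MPMat n) : MPMat n := fun i j => Finset.univ.sup fun k => A i k + B k j

/-- Max-plus matrix power, with `A^0` the max-plus identity. -/
def mpPow (A : MPMat n) : ℕ → MPMat n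
  | 0 => fun i j => if i = j then (0 : WithBot ℝ) else ⊥
  | t + 1 => mpMul A (mpPow A t)

/-- Max-plus matrix-vector product. -/
def mpMulVec (A : MPMat n) (x : Fin n → WithBot ℝ) : Fin n → WithBot ℝ :=
  fun i => Finset.univ.sup fun k => A i k + x k

/-- A digraph on the node set `{1,…,n}`: a set of vertices together with an
edge relation. -/
structure SubD (n : ℕ) where
  verts : Set (Fin n)
  edge : Fin n → Fin n → Prop

/-- The weighted digraph `𝒟(A)` of a max-plus matrix: all `n` nodes, with an
edge `(i,j)` whenever `a_{ij} ≠ -∞`. -/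
def digr (A : MPMat n) : SubD n := ⟨Set.univ, fun i j => A i j ≠ ⊥⟩

/-- `W` (a nonempty list of nodes) is a walk in the digraph `G`. -/
def IsWalkIn (G : SubD n) (W : List (Fin n)) : Prop :=
  W ≠ [] ∧ (∀ v ∈ W, v ∈ G.verts) ∧ W.Chain' G.edge

/-- The length of a walk: its number of edges (number of nodes minus one). -/
def elen (W : List (Fin n)) : ℕ := W.length - 1

/-- The weight `p(W)` of a walk: sum of the weights of its edges. -/
def walkWeight (A : MPMat n) (W : List (Fin n)) : WithBot ℝ :=
  ((W.zip W.tail).map fun p => A p.1 p.2).sum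

/-- `W` is a cycle in `G`: a nonempty closed walk with pairwise distinct
nodes (apart from the repeated endpoint). -/
def IsCycleIn (G : SubD n) (W : List (Fin n)) : Prop :=
  IsWalkIn G W ∧ 2 ≤ W.length ∧ W.head? = W.getLast? ∧ W.dropLast.Nodup

/-- `W` is a path in `G`: a walk with no repeated node. -/
def IsPathIn (G : SubD n) (W : List (Fin n)) : Prop :=
  IsWalkIn G W ∧ W.Nodup

/-- `v` is reachable from `u` by a (possibly empty) walk in `G`. -/
def ReachIn (G : SubD n) (u v : Fin n) : Prop :=
  ∃ W, IsWalkIn G W ∧ W.head? = some u ∧ W.getLast? = some v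

/-- `u` and `v` lie in the same strongly connected component of `G`. -/
def SccEq (G : SubD n) (u v : Fin n) : Prop := ReachIn G u v ∧ ReachIn G v u

/-- The node set of the s.c.c. of `u` in `G`. -/
def sccOf (G : SubD n) (u : Fin n) : Set (Fin n) := {v | SccEq G u v}

/-- The s.c.c. of `u` in `G`, as a digraph. -/
def sccSub (G : SubD n) (u : Fin n) : SubD n :=
  ⟨sccOf G u, fun a b => G.edge a b ∧ a ∈ sccOf G u ∧ b ∈ sccOf G u⟩

/-- `H` is a subgraph of `G`. -/
def SubLE (H G : SubD n) : Prop := H.verts ⊆ G.verts ∧ ∀ u v, H.edge u v → G.edge u v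

/-- `G` is completely reducible: there are no edges between distinct s.c.c.'s,
i.e. every edge lies inside an s.c.c. -/
def CompletelyReducible (G : SubD n) : Prop := ∀ u v, G.edge u v → ReachIn G v u

/-- `G` has no trivial s.c.c.: every node lies on a cycle of `G`. -/
def NoTrivialScc (G : SubD n) : Prop := ∀ v ∈ G.verts, ∃ W, IsCycleIn G W ∧ v ∈ W

/-- `A` is irreducible: `𝒟(A)` is strongly connected. -/
def IrreducibleMat (A : MPMat n) : Prop := ∀ i j : Fin n, ReachIn (digr A) i j

/-- `W` is a closed walk at node `v` in `G`. -/
def IsClosedWalkAt (G : SubD n) (v : Fin n) (W : List (Fin n)) : Prop :=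
  IsWalkIn G W ∧ W.head? = some v ∧ W.getLast? = some v

/-- The greatest common divisor of a set of naturals (0 for the empty set). -/
def setGcd (S : Set ℕ) : ℕ :=
  sInf {d | (∀ s ∈ S, d ∣ s) ∧ ∀ e, (∀ s ∈ S, e ∣ s) → e ∣ d}

/-- The least common multiple of a set of naturals: the least positive common
multiple (0 if there is none). -/
def setLcm (S : Set ℕ) : ℕ := sInf {m | 0 < m ∧ ∀ s ∈ S, s ∣ m}

/-- The cyclicity of the s.c.c. of `v` in `G`: the gcd of the lengths of the
closed walks of `G` through `v` (0 if `v` lies on no nonempty closed walk). -/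
def sccCyclicity (G : SubD n) (v : Fin n) : ℕ :=
  setGcd {l | 0 < l ∧ ∃ W, IsClosedWalkAt G v W ∧ elen W = l}

/-- The cyclicity of a digraph: the lcm of the cyclicities of its
(nontrivial) s.c.c.'s. -/
def graphCyclicity (G : SubD n) : ℕ :=
  setLcm {c | ∃ v ∈ G.verts, c = sccCyclicity G v ∧ 0 < c}

/-- The walk `W` has mean weight `m`, i.e. `p(W) = l(W)·m` (finitely). -/
def meanIs (A : MPMat n) (W : List (Fin n)) (m : ℝ) : Prop :=
  walkWeight A W = (((elen W : ℝ) * m : ℝ) : WithBot ℝ)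

/-- `lam` is the maximum cycle mean `λ(A)` of `A`: it is the mean of some
cycle of `𝒟(A)` and no cycle has a larger mean.  (Its existence is
equivalent to `𝒟(A)` containing a cycle, i.e. `λ(A) ≠ -∞`.) -/
def IsMaxCycleMean (A : MPMat n) (lam : ℝ) : Prop :=
  (∃ W, IsCycleIn (digr A) W ∧ meanIs A W lam) ∧
  ∀ W m, IsCycleIn (digr A) W → meanIs A W m → m ≤ lam

/-- The set of critical nodes: nodes on some cycle of mean `λ(A)`. -/
def critNodes (A : MPMat n) (lam : ℝ) : Set (Fin n) :=
  {v | ∃ W, IsCycleIn (digr A) W ∧ meanIs A W lam ∧ v ∈ W}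

/-- Critical edges: edges of some cycle of mean `λ(A)`. -/
def critEdges (A : MPMat n) (lam : ℝ) (u v : Fin n) : Prop :=
  ∃ W, IsCycleIn (digr A) W ∧ meanIs A W lam ∧ (u, v) ∈ W.zip W.tail

/-- The critical graph `𝒞(A)`. -/
def critSub (A : MPMat n) (lam : ℝ) : SubD n := ⟨critNodes A lam, critEdges A lam⟩

/-- Add the real constant `c` to every entry. -/
def shiftMat (A : MPMat n) (c : ℝ) : MPMat n := fun i j => A i j + (c : WithBot ℝ)

/-- The max-plus Kleene star `X^* = I ⊕ X ⊕ X² ⊕ ⋯` (entrywise supremum). -/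
def mpStar (X : MPMat n) : MPMat n := fun i j => ⨆ t : ℕ, mpPow X t i j

/-- The matrix `M = (((-λ)⊗A)^{γ(𝒢)})^*` used to define the CSR terms. -/
def csrM (A : MPMat n) (lam : ℝ) (G : SubD n) : MPMat n :=
  mpStar (mpPow (shiftMat A (-lam)) (graphCyclicity G))

/-- The `C` term of the CSR expansion of `A` w.r.t. the subgraph `G`. -/
def csrC (A : MPMat n) (lam : ℝ) (G : SubD n) : MPMat n :=
  fun i j => if j ∈ G.verts then csrM A lam G i j else ⊥

/-- The `R` term of the CSR expansion of `A` w.r.t. the subgraph `G`. -/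
def csrR (A : MPMat n) (lam : ℝ) (G : SubD n) : MPMat n :=
  fun i j => if i ∈ G.verts then csrM A lam G i j else ⊥

/-- The `S` term of the CSR expansion of `A` w.r.t. the subgraph `G`. -/
def csrS (A : MPMat n) (lam : ℝ) (G : SubD n) : MPMat n :=
  fun i j => if G.edge i j then A i j + ((-lam : ℝ) : WithBot ℝ) else ⊥

/-- The matrix `C S^t R`. -/
def csr (A : MPMat n) (lam : ℝ) (G : SubD n) (t : ℕ) : MPMat n :=
  mpMul (mpMul (csrC A lam G) (mpPow (csrS A lam G) t)) (csrR A lam G)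

/-- `G` is a representing subgraph of the critical graph `crit`: a completely
reducible subgraph (with no trivial s.c.c.) such that every s.c.c. of `crit`
contains exactly one s.c.c. of `G`. -/
structure IsRepresenting (crit G : SubD n) : Prop where
  le : SubLE G crit
  compRed : CompletelyReducible G
  noTriv : NoTrivialScc G
  covers : ∀ u ∈ crit.verts, ∃ v ∈ G.verts, SccEq crit u v
  unique : ∀ v ∈ G.verts, ∀ w ∈ G.verts, SccEq crit v w → SccEq G v w

/-- `B` is subordinate to `A`: obtained from `A` by setting some entries to `-∞`. -/
def Subordinate (B A : MPMat n) : Prop := ∀ i j, B i j = A i j ∨ B i j = ⊥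

/-- Set to `-∞` all entries in the rows and columns indexed by `S`. -/
def zeroRC (A : MPMat n) (S : Set (Fin n)) : MPMat n :=
  fun i j => if i ∈ S ∨ j ∈ S then ⊥ else A i j

/-- The Nachtigall scheme: zero out the rows and columns of critical nodes. -/
def bN (A : MPMat n) (lam : ℝ) : MPMat n := zeroRC A (critNodes A lam)

/-- `V` is a max-balancing of `A`: `V = D⁻¹((-λ(A))⊗A)D` with all entries `≤ 0`,
entries `0` on critical edges, and every edge of `𝒟(V)` lies on a cycle all of
whose edges have weight at least that of the given edge (cycle cover). -/
def IsMaxBalancing (A : MPMat n) (lam : ℝ) (V : MPMat n) : Prop :=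
  (∃ d : Fin n → ℝ, ∀ i j, V i j = A i j + ((d j - d i - lam : ℝ) : WithBot ℝ)) ∧
  (∀ i j, V i j ≤ (0 : WithBot ℝ)) ∧
  (∀ i j, critEdges A lam i j → V i j = (0 : WithBot ℝ)) ∧
  (∀ i j, V i j ≠ ⊥ →
    ∃ W, IsCycleIn (digr V) W ∧ (i, j) ∈ W.zip W.tail ∧ ∀ p ∈ W.zip W.tail, V i j ≤ V p.1 p.2)

/-- The Hartmann-Arguelles threshold graph `Θ^{ha}(μ)`: induced by the edges
with `v_{ij} ≥ μ`; by convention `Θ^{ha}(-∞) = 𝒟(A)`. -/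
def thrHA (A V : MPMat n) (μ : WithBot ℝ) : SubD n :=
  if μ = ⊥ then digr A
  else ⟨{u | ∃ w, μ ≤ V u w ∨ μ ≤ V w u}, fun u v => μ ≤ V u v⟩

/-- The cycle threshold graph `Θ^{ct}(μ)`: induced by all nodes and edges of
cycles of mean weight `≥ μ`; by convention `Θ^{ct}(-∞) = 𝒟(A)`. -/
def thrCT (A : MPMat n) (μ : WithBot ℝ) : SubD n :=
  if μ = ⊥ then digr A
  else ⟨{v | ∃ W m, IsCycleIn (digr A) W ∧ meanIs A W m ∧ μ ≤ (m : WithBot ℝ) ∧ v ∈ W},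
        fun u v => ∃ W m, IsCycleIn (digr A) W ∧ meanIs A W m ∧ μ ≤ (m : WithBot ℝ) ∧
          (u, v) ∈ W.zip W.tail⟩

/-- `Θ` has an s.c.c. containing no s.c.c. of `crit`. -/
def HasFreeScc (Θ crit : SubD n) : Prop :=
  ∃ u ∈ Θ.verts, ¬ ∃ w ∈ crit.verts, sccOf crit w ⊆ sccOf Θ u

/-- `μ` is the greatest value `≤ λ(A)` satisfying `P` (or `-∞` if there is
no such value). -/
def IsThrMax (P : WithBot ℝ → Prop) (lam : ℝ) (μ : WithBot ℝ) : Prop :=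
  (μ ≤ (lam : WithBot ℝ) ∧ P μ ∧ ∀ μ', μ' ≤ (lam : WithBot ℝ) → P μ' → μ' ≤ μ) ∨
  (μ = ⊥ ∧ ∀ μ', μ' ≤ (lam : WithBot ℝ) → ¬ P μ')

/-- `μ = μ^{ha}` for the max-balancing `V` of `A`. -/
def IsMuHA (A : MPMat n) (lam : ℝ) (V : MPMat n) (μ : WithBot ℝ) : Prop :=
  IsThrMax (fun m => HasFreeScc (thrHA A V m) (critSub A lam)) lam μ

/-- `μ = μ^{ct}` for `A`. -/
def IsMuCT (A : MPMat n) (lam : ℝ) (μ : WithBot ℝ) : Prop :=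
  IsThrMax (fun m => HasFreeScc (thrCT A m) (critSub A lam)) lam μ

/-- The union of the s.c.c.'s of `Θ` intersecting the node set `crit`. -/
def unionSccMeeting (Θ : SubD n) (crit : Set (Fin n)) : Set (Fin n) :=
  {v | v ∈ Θ.verts ∧ ∃ w ∈ crit, SccEq Θ v w}

/-- The node set `𝒢^{ha}` of the Hartmann-Arguelles scheme. -/
def haNodes (A V : MPMat n) (lam : ℝ) (μ : WithBot ℝ) : Set (Fin n) :=
  unionSccMeeting (thrHA A V μ) (critNodes A lam)

/-- The matrix `B^{HA}` of the Hartmann-Arguelles scheme. -/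
def bHA (A V : MPMat n) (lam : ℝ) (μ : WithBot ℝ) : MPMat n :=
  zeroRC A (haNodes A V lam μ)

/-- The node set `𝒢^{ct}` of the cycle threshold scheme. -/
def ctNodes (A : MPMat n) (lam : ℝ) (μ : WithBot ℝ) : Set (Fin n) :=
  unionSccMeeting (thrCT A μ) (critNodes A lam)

/-- The matrix `B^{ct}` of the cycle threshold scheme. -/
def bCT (A : MPMat n) (lam : ℝ) (μ : WithBot ℝ) : MPMat n :=
  zeroRC A (ctNodes A lam μ)

/-- The graph `𝒢^{ct}`: the union of the s.c.c.'s of `Θ^{ct}(μ^{ct})`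
intersecting `𝒞(A)`, as a digraph. -/
def ctSub (A : MPMat n) (lam : ℝ) (μ : WithBot ℝ) : SubD n :=
  ⟨ctNodes A lam μ,
   fun u v => (thrCT A μ).edge u v ∧ u ∈ ctNodes A lam μ ∧ v ∈ ctNodes A lam μ⟩

/-- The circumference of `G`: the greatest length of a cycle of `G`. -/
def circumf (G : SubD n) : ℕ := sSup {l | ∃ W, IsCycleIn G W ∧ W.length = l + 1}

/-- The cab driver's diameter of `G`: the greatest length of a path of `G`. -/
def cabDiam (G : SubD n) : ℕ := sSup {l | ∃ W, IsPathIn G W ∧ W.length = l + 1}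

/-- The girth of the s.c.c. of `v` in `G`: the least length of a cycle lying
in the s.c.c. of `v`. -/
def sccGirth (G : SubD n) (v : Fin n) : ℕ :=
  sInf {l | 0 < l ∧ ∃ W, IsCycleIn G W ∧ W.length = l + 1 ∧ ∀ u ∈ W, SccEq G v u}

/-- The max-girth of `G`: the greatest girth of an s.c.c. of `G`. -/
def maxGirth (G : SubD n) : ℕ := sSup {g | ∃ v ∈ G.verts, 0 < g ∧ g = sccGirth G v}

/-- The max-cyclicity of `G`: the greatest cyclicity of an s.c.c. of `G`. -/
def maxCyclicity (G : SubD n) : ℕ := sSup {c | ∃ v ∈ G.verts, 0 < c ∧ c = sccCyclicity G v}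

/-- The Wielandt number: `Wi(n) = (n-1)² + 1` for `n > 1`, `Wi(1) = 0`. -/
def wielandt (k : ℕ) : ℕ := if k ≤ 1 then 0 else (k - 1) ^ 2 + 1

/-- The set of finite entries of `A`. -/
def finEntries (A : MPMat n) : Set ℝ := {x | ∃ i j, A i j = (x : WithBot ℝ)}

/-- The least finite entry of `A`. -/
def minEnt (A : MPMat n) : ℝ := sInf (finEntries A)

/-- The greatest finite entry of `A`. -/
def maxEnt (A : MPMat n) : ℝ := sSup (finEntries A)

/-- `‖A‖`: the difference between the greatest and least finite entries. -/
def matNorm (A : MPMat n) : ℝ := maxEnt A - minEnt A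

/-- `n_B`: the size of the smallest square submatrix of `B` containing all
finite entries of `B`. -/
def nB (B : MPMat n) : ℕ := Set.ncard {i | ∃ j, B i j ≠ ⊥ ∨ B j i ≠ ⊥}

/-- `‖v‖`: the difference between the greatest and least entries of `v`. -/
def vecNorm (v : Fin n → ℝ) : ℝ := sSup (Set.range v) - sInf (Set.range v)

/-- The exploration penalty `ep^γ(i)` (w.r.t. the graph `crit`): the least `T`
such that for every multiple `t` of `γ` with `t ≥ T` there is a closed walk of
length `t` at `i` in `crit`. -/
def epAt (crit : SubD n) (γ : ℕ) (i : Fin n) : ℕ :=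
  sInf {T | ∀ t, γ ∣ t → T ≤ t → ∃ W, IsClosedWalkAt crit i W ∧ elen W = t}

/-- The exploration penalty `ep^γ(S)`: the maximum of `ep^γ(i)` over `i ∈ S`. -/
def epOn (crit : SubD n) (γ : ℕ) (S : Set (Fin n)) : ℕ := sSup {e | ∃ i ∈ S, e = epAt crit γ i}

/-- `ep(𝒞(A))`: the maximum over the s.c.c.'s `𝒞_l` of `crit` of
`ep^{γ(𝒞_l)}(𝒞_l)`. -/
def epCrit (crit : SubD n) : ℕ :=
  sSup {e | ∃ i ∈ crit.verts, e = epAt crit (sccCyclicity crit i) i}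

/-- The weak CSR expansion `A^t = λ^{⊗t}⊗(CS^tR) ⊕ B^t` holds at time `t`
(with CSR terms taken w.r.t. the subgraph `G`). -/
def weakCSReq (A B : MPMat n) (lam : ℝ) (G : SubD n) (t : ℕ) : Prop :=
  ∀ i j, mpPow A t i j = max (csr A lam G t i j + (((t : ℝ) * lam : ℝ) : WithBot ℝ)) (mpPow B t i j)

/-- The domination `λ^{⊗t}⊗(CS^tR) ≥ B^t` holds at time `t`. -/
def T2eq (A B : MPMat n) (lam : ℝ) (G : SubD n) (t : ℕ) : Prop :=
  ∀ i j, mpPow B t i j ≤ csr A lam G t i j + (((t : ℝ) * lam : ℝ) : WithBot ℝ)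

/-- The domination `λ^{⊗t}⊗(CS^tRv) ≥ B^t v` holds at time `t`. -/
def T2veq (A B : MPMat n) (lam : ℝ) (G : SubD n) (v : Fin n → ℝ) (t : ℕ) : Prop :=
  ∀ i, mpMulVec (mpPow B t) (fun j => (v j : WithBot ℝ)) i
      ≤ mpMulVec (csr A lam G t) (fun j => (v j : WithBot ℝ)) i + (((t : ℝ) * lam : ℝ) : WithBot ℝ)

/-- One step of removing a (nonempty) closed subwalk from a walk. -/
def RemoveStep (W V : List (Fin n)) : Prop :=
  ∃ (pre mid post : List (Fin n)) (x : Fin n),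
    W = pre ++ x :: mid ++ x :: post ∧ V = pre ++ x :: post

/-- One step of inserting a cycle of `C` into a walk (at an occurrence of a
node of that cycle). -/
def InsertStep (C : SubD n) (W V : List (Fin n)) : Prop :=
  ∃ (pre post mid : List (Fin n)) (x : Fin n),
    W = pre ++ x :: post ∧ V = pre ++ x :: mid ++ x :: post ∧ IsCycleIn C (x :: mid ++ [x])

/-- `V` is obtained from `W` by removing cycles. -/
def RemOnly : List (Fin n) → List (Fin n) → Prop := Relation.ReflTransGen RemoveStep

/-- `V` is obtained from `W` by removing cycles and possibly inserting cycles
of `C`. -/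
def RemIns (C : SubD n) : List (Fin n) → List (Fin n) → Prop :=
  Relation.ReflTransGen fun W V => RemoveStep W V ∨ InsertStep C W V

/-- `V` is obtained from `W` by removing at least one cycle and possibly
inserting cycles of `C`. -/
def RemInsStrict (C : SubD n) (W V : List (Fin n)) : Prop :=
  ∃ W₁ W₂, RemIns C W W₁ ∧ RemoveStep W₁ W₂ ∧ RemIns C W₂ V

/-- `T` witnesses the cycle removal threshold `T_cr^γ(C) ≤ T` in the digraph
`G`: every walk of `G` through `C` of length `≥ T` can be reduced (removing
cycles, possibly inserting cycles of `C`) to a walk through `C` with the same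
endpoints, the same length mod `γ`, and length `≤ T`. -/
def TcrProp (G C : SubD n) (γ T : ℕ) : Prop :=
  ∀ W, IsWalkIn G W → (∃ v ∈ C.verts, v ∈ W) → T ≤ elen W →
    ∃ V, RemIns C W V ∧ IsWalkIn G V ∧ (∃ v ∈ C.verts, v ∈ V) ∧
      V.head? = W.head? ∧ V.getLast? = W.getLast? ∧ elen V ≡ elen W [MOD γ] ∧ elen V ≤ T

/-- `T` witnesses the strict cycle removal threshold `T̃_cr^γ(C) ≤ T`. -/
def TcrStrictProp (G C : SubD n) (γ T : ℕ) : Prop :=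
  ∀ W, IsWalkIn G W → (∃ v ∈ C.verts, v ∈ W) → T ≤ elen W →
    ∃ V, RemInsStrict C W V ∧ IsWalkIn G V ∧ (∃ v ∈ C.verts, v ∈ V) ∧
      V.head? = W.head? ∧ V.getLast? = W.getLast? ∧ elen V ≡ elen W [MOD γ] ∧ elen V ≤ T

/-- The cycle removal threshold `T_cr^γ(C)` of the subgraph `C` in `G`. -/
def Tcr (G C : SubD n) (γ : ℕ) : ℕ := sInf {T | TcrProp G C γ T}

/-- The strict cycle removal threshold `T̃_cr^γ(C)` of the subgraph `C` in `G`. -/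
def TcrStrict (G C : SubD n) (γ : ℕ) : ℕ := sInf {T | TcrStrictProp G C γ T}

/-- The subgraph formed by the nodes and edges of the walk `W`. -/
def cycleSub (W : List (Fin n)) : SubD n :=
  ⟨{v | v ∈ W}, fun a b => (a, b) ∈ W.zip W.tail⟩

/-- The single-node subgraph `{i}` (with no edges). -/
def singleSub (i : Fin n) : SubD n := ⟨{i}, fun _ _ => False⟩

/-- `λ(M)` as an element of `ℝmax` (`-∞` if `𝒟(M)` has no cycle). -/
def lamW (M : MPMat n) : WithBot ℝ :=
  sSup {x : WithBot ℝ | ∃ W m, IsCycleIn (digr M) W ∧ meanIs M W m ∧ x = (m : WithBot ℝ)}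

end MaxPlus

section SecA
namespace MaxPlus
variable {n : ℕ}

lemma add_max_distrib (a b c : WithBot ℝ) : (a ⊔ b) + c = (a + c) ⊔ (b + c) := by
  rcases le_total a b with h'|h'
  · rw [sup_eq_right.2 h', sup_eq_right.2 (add_le_add_left h' c)]
  · rw [sup_eq_left.2 h', sup_eq_left.2 (add_le_add_left h' c)]

lemma max_add_distrib (a b c : WithBot ℝ) : c + (a ⊔ b) = (c + a) ⊔ (c + b) := by
  rw [add_comm, add_max_distrib, add_comm a c, add_comm b c]

lemma finsetSup_add_le {α : Type*} {s : Finset α} {f : α → WithBot ℝ} {c L : WithBot ℝ}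
    (h : ∀ k ∈ s, f k + c ≤ L) : s.sup f + c ≤ L := by
  classical
  induction s using Finset.induction_on with
  | empty => simp
  | @insert a s' hx ih =>
    rw [Finset.sup_insert, add_max_distrib]
    exact sup_le (h a (Finset.mem_insert_self a s'))
      (ih fun k hk => h k (Finset.mem_insert_of_mem hk))

lemma add_eq_bot_iff {a b : WithBot ℝ} : a + b = ⊥ ↔ a = ⊥ ∨ b = ⊥ := WithBot.add_eq_bot

lemma ciSup_add_le' {x : ℕ → WithBot ℝ} {c L : WithBot ℝ}
    (h : ∀ m, x m + c ≤ L) : (⨆ m, x m) + c ≤ L := by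
  cases c with
  | bot => simp
  | coe c0 =>
    cases hT : (⨆ m, x m) with
    | bot => simp
    | coe τ =>
      cases L with
      | bot =>
        exfalso
        have hb : ∀ m, x m = ⊥ := by
          intro m
          have := h m
          rw [le_bot_iff, add_eq_bot_iff] at this
          rcases this with h'|h'
          · exact h'
          · exact absurd h' (by simp)
        have h2 : (⨆ m, x m) ≤ (⊥ : WithBot ℝ) := ciSup_le fun m => le_of_eq (hb m)
        rw [hT] at h2
        simp at h2
      | coe l =>
        have hle : (⨆ m, x m) ≤ ((l - c0 : ℝ) : WithBot ℝ) := by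
          apply ciSup_le
          intro m
          cases hxm : x m with
          | bot => simp
          | coe v =>
            have := h m
            rw [hxm, ← WithBot.coe_add, WithBot.coe_le_coe] at this
            rw [WithBot.coe_le_coe]
            linarith
        rw [hT, WithBot.coe_le_coe] at hle
        rw [← WithBot.coe_add, WithBot.coe_le_coe]
        linarith

lemma add_ciSup_le' {y : ℕ → WithBot ℝ} {c L : WithBot ℝ}
    (h : ∀ m, c + y m ≤ L) : c + (⨆ m, y m) ≤ L := by
  rw [add_comm]
  exact ciSup_add_le' fun m => by rw [add_comm]; exact h m

lemma csum3 {x y : ℕ → WithBot ℝ} {s L : WithBot ℝ}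
    (h : ∀ m1 m2, x m1 + s + y m2 ≤ L) :
    (⨆ m, x m) + s + (⨆ m, y m) ≤ L := by
  apply add_ciSup_le'
  intro m2
  rw [add_assoc]
  exact ciSup_add_le' fun m1 => by rw [← add_assoc]; exact h m1 m2

lemma sum_eq_bot_of_mem {α : Type*} {s : Finset α} {g : α → WithBot ℝ} {a : α}
    (ha : a ∈ s) (h : g a = ⊥) : ∑ x ∈ s, g x = ⊥ := by
  classical
  rw [← Finset.add_sum_erase s g ha, h, WithBot.bot_add]

end MaxPlus
end SecA
section SecB
namespace MaxPlus
variable {n : ℕ}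

/-- weight of the first `t` steps of the node sequence `f`. -/
def sW (X : MPMat n) (f : ℕ → Fin n) (t : ℕ) : WithBot ℝ :=
  ∑ s ∈ Finset.range t, X (f s) (f (s+1))

lemma sW_zero (X : MPMat n) (f : ℕ → Fin n) : sW X f 0 = 0 := by simp [sW]

lemma sW_succ (X : MPMat n) (f : ℕ → Fin n) (t : ℕ) :
    sW X f (t+1) = sW X f t + X (f t) (f (t+1)) := by
  simp [sW, Finset.sum_range_succ]

lemma sW_succ_left (X : MPMat n) (f : ℕ → Fin n) (t : ℕ) :
    sW X f (t+1) = X (f 0) (f 1) + sW X (fun s => f (s+1)) t := by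
  rw [sW, Finset.sum_range_succ', add_comm]
  rfl

lemma sW_congr {X : MPMat n} {f g : ℕ → Fin n} {t : ℕ} (h : ∀ s ≤ t, f s = g s) :
    sW X f t = sW X g t := by
  apply Finset.sum_congr rfl
  intro s hs
  rw [Finset.mem_range] at hs
  rw [h s (le_of_lt hs), h (s+1) hs]

lemma sW_add (X : MPMat n) (f : ℕ → Fin n) (s t : ℕ) :
    sW X f (s + t) = sW X f s + sW X (fun r => f (s + r)) t := by
  rw [sW, Finset.sum_range_add]
  rfl

lemma sW_mono {X Y : MPMat n} (h : ∀ i j, X i j ≤ Y i j) (f : ℕ → Fin n) (t : ℕ) :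
    sW X f t ≤ sW Y f t :=
  Finset.sum_le_sum fun s _ => h _ _

lemma sW_ne_bot {X : MPMat n} {f : ℕ → Fin n} {t : ℕ} (h : sW X f t ≠ ⊥) :
    ∀ s < t, X (f s) (f (s+1)) ≠ ⊥ := by
  intro s hs hbot
  exact h (sum_eq_bot_of_mem (Finset.mem_range.2 hs) hbot)

/-- ℝ-valued weight (junk on bottom entries). -/
def rW (X : MPMat n) (f : ℕ → Fin n) (t : ℕ) : ℝ :=
  ∑ s ∈ Finset.range t, ((X (f s) (f (s+1))).unbotD 0)

lemma sW_eq_coe {X : MPMat n} {f : ℕ → Fin n} {t : ℕ}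
    (h : ∀ s < t, X (f s) (f (s+1)) ≠ ⊥) : sW X f t = ((rW X f t : ℝ) : WithBot ℝ) := by
  induction t with
  | zero => simp [sW, rW]
  | succ t ih =>
    rw [sW_succ, ih (fun s hs => h s (Nat.lt_succ_of_lt hs))]
    simp only [rW, Finset.sum_range_succ]
    rw [WithBot.coe_add]
    congr 1
    cases hx : X (f t) (f (t+1)) with
    | bot => exact absurd hx (h t (Nat.lt_succ_self t))
    | coe v => simp [hx]

lemma sW_shift (A : MPMat n) (c : ℝ) (f : ℕ → Fin n) (t : ℕ) :
    sW (shiftMat A c) f t = sW A f t + ((t * c : ℝ) : WithBot ℝ) := by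
  induction t with
  | zero => simp [sW]
  | succ t ih =>
    rw [sW_succ, sW_succ, ih]
    show sW A f t + ↑(t * c) + (A (f t) (f (t+1)) + ↑c) = _
    have : ((t+1 : ℕ) : ℝ) * c = t * c + c := by push_cast; ring
    rw [this, WithBot.coe_add]
    abel

/-- walk weight bounded below matrix power (P1). -/
lemma sW_le_pow (X : MPMat n) : ∀ (t : ℕ) (f : ℕ → Fin n) (i j : Fin n),
    f 0 = i → f t = j → sW X f t ≤ mpPow X t i j := by
  intro t
  induction t with
  | zero =>
    intro f i j h0 h1
    have : i = j := h0 ▸ h1 ▸ rfl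
    simp [sW, mpPow, this]
  | succ t ih =>
    intro f i j h0 h1
    rw [sW_succ_left]
    show _ ≤ mpMul X (mpPow X t) i j
    have step : X (f 0) (f 1) + sW X (fun s => f (s+1)) t ≤ X i (f 1) + mpPow X t (f 1) j := by
      rw [h0]
      exact add_le_add_right (ih _ _ _ rfl h1) _
    exact step.trans (Finset.le_sup (f := fun k => X i k + mpPow X t k j)
      (Finset.mem_univ (f 1)))

/-- attainment of matrix powers (P2). -/
lemma pow_attained (X : MPMat n) : ∀ (t : ℕ) (i j : Fin n),
    mpPow X t i j = ⊥ ∨ ∃ f : ℕ → Fin n, f 0 = i ∧ f t = j ∧ sW X f t = mpPow X t i j := by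
  intro t
  induction t with
  | zero =>
    intro i j
    by_cases h : i = j
    · right; exact ⟨fun _ => i, rfl, h ▸ rfl, by simp [sW, mpPow, h]⟩
    · left; simp [mpPow, h]
  | succ t ih =>
    intro i j
    have hne : (Finset.univ : Finset (Fin n)).Nonempty := ⟨i, Finset.mem_univ i⟩
    obtain ⟨k, -, hk⟩ := Finset.exists_mem_eq_sup Finset.univ hne
      (fun k => X i k + mpPow X t k j)
    show mpMul X (mpPow X t) i j = ⊥ ∨ _
    rw [show mpMul X (mpPow X t) i j = X i k + mpPow X t k j from hk]
    by_cases hXik : X i k = ⊥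
    · left; rw [hXik, WithBot.bot_add]
    rcases ih k j with hb | ⟨g, hg0, hgt, hgw⟩
    · left; rw [hb, WithBot.add_bot]
    right
    refine ⟨fun s => if s = 0 then i else g (s - 1), by simp, by simp [hgt], ?_⟩
    rw [sW_succ_left]
    simp only [if_pos rfl]
    have h1 : (fun s => if s + 1 = 0 then i else g (s + 1 - 1)) = g := by
      funext s; simp
    have : sW X (fun s => if (s+1) = 0 then i else g (s+1-1)) t = sW X g t := by
      rw [h1]
    simp only [Nat.add_sub_cancel]
    rw [show (if (0:ℕ)+1 = 0 then i else g 0) = g 0 by simp, hg0]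
    have h2 : sW X (fun s => if s + 1 = 0 then i else g (s + 1 - 1)) t = sW X g t := this
    calc X i k + sW X (fun s => if s + 1 = 0 then i else g (s+1-1)) t
        = X i k + sW X g t := by rw [h2]
      _ = X i k + mpPow X t k j := by rw [hgw]
      _ = mpPow X (t+1) i j := hk.symm
  
end MaxPlus
end SecB
section SecB2
namespace MaxPlus
variable {n : ℕ}

/-- concatenation of node sequences. -/
def scat (f : ℕ → Fin n) (s : ℕ) (g : ℕ → Fin n) : ℕ → Fin n :=
  fun r => if r ≤ s then f r else g (r - s)

lemma scat_left {f g : ℕ → Fin n} {s r : ℕ} (h : r ≤ s) : scat f s g r = f r := if_pos h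

lemma scat_right {f g : ℕ → Fin n} {s : ℕ} (hfg : f s = g 0) (r : ℕ) :
    scat f s g (s + r) = g r := by
  rcases Nat.eq_zero_or_pos r with h|h
  · subst h; simpa [scat] using hfg
  · have : ¬ (s + r ≤ s) := by omega
    simp [scat, this, Nat.add_sub_cancel_left]

lemma sW_scat (X : MPMat n) {f g : ℕ → Fin n} {s : ℕ} (hfg : f s = g 0) (t : ℕ) :
    sW X (scat f s g) (s + t) = sW X f s + sW X g t := by
  rw [sW_add]
  congr 1
  · exact sW_congr fun r hr => scat_left hr
  · exact sW_congr fun r _ => scat_right hfg r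

lemma pow_mono {X Y : MPMat n} (h : ∀ i j, X i j ≤ Y i j) :
    ∀ t i j, mpPow X t i j ≤ mpPow Y t i j := by
  intro t
  induction t with
  | zero => intro i j; exact le_refl _
  | succ t ih =>
    intro i j
    show mpMul X (mpPow X t) i j ≤ mpMul Y (mpPow Y t) i j
    apply Finset.sup_le
    intro k _
    exact (add_le_add (h i k) (ih k j)).trans
      (Finset.le_sup (f := fun k => Y i k + mpPow Y t k j) (Finset.mem_univ k))

/-- (P1') walks of length `γ*m` bound entries of the `m`-th power of the `γ`-th power. -/
lemma sW_le_pow_pow (X : MPMat n) (γ : ℕ) : ∀ (m : ℕ) (f : ℕ → Fin n) (i j : Fin n),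
    f 0 = i → f (γ * m) = j → sW X f (γ * m) ≤ mpPow (mpPow X γ) m i j := by
  intro m
  induction m with
  | zero =>
    intro f i j h0 h1
    rw [Nat.mul_zero] at h1 ⊢
    have : i = j := h0 ▸ h1 ▸ rfl
    simp [sW, mpPow, this]
  | succ m ih =>
    intro f i j h0 h1
    have hsplit : γ * (m+1) = γ + γ * m := by ring
    rw [hsplit, sW_add]
    have hle1 : sW X f γ ≤ mpPow X γ i (f γ) := sW_le_pow X γ f i (f γ) h0 rfl
    have hle2 : sW X (fun r => f (γ + r)) (γ * m) ≤ mpPow (mpPow X γ) m (f γ) j := by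
      apply ih
      · rfl
      · show f (γ + γ * m) = j
        rw [← hsplit]; exact h1
    refine (add_le_add hle1 hle2).trans ?_
    show _ ≤ mpMul (mpPow X γ) (mpPow (mpPow X γ) m) i j
    exact Finset.le_sup (f := fun k => mpPow X γ i k + mpPow (mpPow X γ) m k j)
      (Finset.mem_univ (f γ))

/-- (P2') attainment for powers of powers. -/
lemma pow_pow_attained (X : MPMat n) (γ : ℕ) : ∀ (m : ℕ) (i j : Fin n),
    mpPow (mpPow X γ) m i j = ⊥ ∨
    ∃ f : ℕ → Fin n, f 0 = i ∧ f (γ * m) = j ∧ sW X f (γ * m) = mpPow (mpPow X γ) m i j := by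
  intro m
  induction m with
  | zero =>
    intro i j
    by_cases h : i = j
    · right; exact ⟨fun _ => i, rfl, h ▸ rfl, by simp [sW, mpPow, h]⟩
    · left; simp [mpPow, h]
  | succ m ih =>
    intro i j
    have hne : (Finset.univ : Finset (Fin n)).Nonempty := ⟨i, Finset.mem_univ i⟩
    obtain ⟨k, -, hk⟩ := Finset.exists_mem_eq_sup Finset.univ hne
      (fun k => mpPow X γ i k + mpPow (mpPow X γ) m k j)
    have hk' : mpPow (mpPow X γ) (m+1) i j = mpPow X γ i k + mpPow (mpPow X γ) m k j := hk
    rw [hk']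
    rcases pow_attained X γ i k with hb | ⟨f1, hf10, hf1t, hf1w⟩
    · left; rw [hb, WithBot.bot_add]
    rcases ih k j with hb | ⟨f2, hf20, hf2t, hf2w⟩
    · left; rw [hb, WithBot.add_bot]
    right
    have hmeet : f1 γ = f2 0 := by rw [hf1t, hf20]
    refine ⟨scat f1 γ f2, ?_, ?_, ?_⟩
    · rw [show (0:ℕ) = 0 from rfl, scat_left (Nat.zero_le γ), hf10]
    · have : γ * (m+1) = γ + γ * m := by ring
      rw [this, scat_right hmeet, hf2t]
    · have : γ * (m+1) = γ + γ * m := by ring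
      rw [this, sW_scat X hmeet, hf1w, hf2w]

end MaxPlus
end SecB2
section SecC
namespace MaxPlus
variable {n : ℕ}

/-- sequence-based walk predicate. -/
def SWalk (G : SubD n) (f : ℕ → Fin n) (t : ℕ) : Prop :=
  (∀ s ≤ t, f s ∈ G.verts) ∧ ∀ s < t, G.edge (f s) (f (s+1))

lemma SWalk.restrict {G : SubD n} {f : ℕ → Fin n} {t t' : ℕ} (h : SWalk G f t) (ht : t' ≤ t) :
    SWalk G f t' :=
  ⟨fun s hs => h.1 s (hs.trans ht), fun s hs => h.2 s (lt_of_lt_of_le hs ht)⟩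

lemma SWalk.shift {G : SubD n} {f : ℕ → Fin n} {s t : ℕ} (h : SWalk G f (s + t)) :
    SWalk G (fun r => f (s + r)) t := by
  constructor
  · intro r hr; exact h.1 (s + r) (by omega)
  · intro r hr
    have := h.2 (s + r) (by omega)
    simpa [Nat.add_assoc] using this

lemma SWalk.scat {G : SubD n} {f g : ℕ → Fin n} {s t : ℕ} (hf : SWalk G f s)
    (hg : SWalk G g t) (hfg : f s = g 0) : SWalk G (MaxPlus.scat f s g) (s + t) := by
  constructor
  · intro r hr
    by_cases h : r ≤ s
    · rw [scat_left h]; exact hf.1 r h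
    · have : r = s + (r - s) := by omega
      rw [this, scat_right hfg]
      exact hg.1 (r - s) (by omega)
  · intro r hr
    by_cases h : r + 1 ≤ s
    · rw [scat_left h, scat_left (by omega)]
      exact hf.2 r (by omega)
    · by_cases h2 : r ≤ s
      · have hrs : r = s := by omega
        subst hrs
        rw [scat_left (le_refl r), show r + 1 = r + 1 from rfl]
        have : MaxPlus.scat f r g (r + 1) = g 1 := scat_right hfg 1
        rw [this, hfg]
        exact hg.2 0 (by omega)
      · have e1 := scat_right hfg (r - s)
        have e2 := scat_right hfg (r - s + 1)
        rw [show s + (r - s + 1) = r + 1 by omega] at e2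
        rw [show s + (r - s) = r by omega] at e1
        rw [e1, e2]
        exact hg.2 (r - s) (by omega)

/-- the list of the first `t` steps of `f`. -/
def ofSeq (f : ℕ → Fin n) (t : ℕ) : List (Fin n) := (List.range (t+1)).map f

lemma ofSeq_length (f : ℕ → Fin n) (t : ℕ) : (ofSeq f t).length = t + 1 := by
  simp [ofSeq]

lemma ofSeq_ne_nil (f : ℕ → Fin n) (t : ℕ) : ofSeq f t ≠ [] := by
  intro h
  have := ofSeq_length f t
  rw [h] at this
  simp at this

lemma getD_ofSeq {f : ℕ → Fin n} {t s : ℕ} (hs : s ≤ t) (d : Fin n) :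
    (ofSeq f t).getD s d = f s := by
  rw [List.getD_eq_getElem _ _ (by rw [ofSeq_length]; omega)]
  simp [ofSeq]

lemma head?_eq_getD {W : List (Fin n)} (h : W ≠ []) (d : Fin n) :
    W.head? = some (W.getD 0 d) := by
  cases W with
  | nil => exact absurd rfl h
  | cons a l => simp

lemma getLast?_eq_getD {W : List (Fin n)} (h : W ≠ []) (d : Fin n) :
    W.getLast? = some (W.getD (W.length - 1) d) := by
  have hl : W.length - 1 < W.length := by
    cases W with
    | nil => exact absurd rfl h
    | cons a l => simp
  rw [List.getLast?_eq_getElem?, List.getElem?_eq_getElem hl,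
    List.getD_eq_getElem _ _ hl]

lemma chain'_iff_getD {R : Fin n → Fin n → Prop} {W : List (Fin n)} (d : Fin n) :
    W.Chain' R ↔ ∀ s, s + 1 < W.length → R (W.getD s d) (W.getD (s+1) d) := by
  rw [show W.Chain' R ↔ W.IsChain R from Iff.rfl, List.isChain_iff_getElem]
  constructor
  · intro h s hs
    rw [List.getD_eq_getElem _ _ (by omega), List.getD_eq_getElem _ _ hs]
    exact h s (by omega)
  · intro h s hs
    have := h s (by omega)
    rwa [List.getD_eq_getElem _ _ (by omega), List.getD_eq_getElem _ _ (by omega)] at this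

lemma mem_iff_getD {W : List (Fin n)} {v : Fin n} (d : Fin n) :
    v ∈ W ↔ ∃ s < W.length, W.getD s d = v := by
  rw [List.mem_iff_get]
  constructor
  · rintro ⟨⟨s, hs⟩, h⟩
    exact ⟨s, hs, by rwa [List.getD_eq_getElem _ _ hs]⟩
  · rintro ⟨s, hs, h⟩
    exact ⟨⟨s, hs⟩, by rwa [List.getD_eq_getElem _ _ hs] at h⟩

lemma zip_tail_mem_iff {W : List (Fin n)} {x y : Fin n} (d : Fin n) :
    (x, y) ∈ W.zip W.tail ↔ ∃ s, s + 1 < W.length ∧ W.getD s d = x ∧ W.getD (s+1) d = y := by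
  induction W with
  | nil => simp
  | cons a l ih =>
    cases l with
    | nil => simp
    | cons b l' =>
      show (x, y) ∈ (a, b) :: (b :: l').zip (b :: l').tail ↔ _
      rw [List.mem_cons, ih]
      constructor
      · rintro (h | ⟨s, hs, h1, h2⟩)
        · rw [Prod.mk.injEq] at h
          exact ⟨0, by simp, by simp [h.1], by simp [h.2]⟩
        · refine ⟨s + 1, ?_, ?_, ?_⟩
          · simp only [List.length_cons] at hs ⊢; omega
          · rw [List.getD_cons_succ]; exact h1
          · rw [List.getD_cons_succ]; exact h2
      · rintro ⟨s, hs, h1, h2⟩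
        cases s with
        | zero =>
          left
          simp only [List.getD_cons_zero] at h1
          simp only [List.getD_cons_succ, List.getD_cons_zero] at h2
          rw [← h1, ← h2]
        | succ s' =>
          right
          refine ⟨s', ?_, ?_, ?_⟩
          · simp only [List.length_cons] at hs ⊢; omega
          · rw [List.getD_cons_succ] at h1; exact h1
          · rw [List.getD_cons_succ] at h2; exact h2

lemma walkWeight_eq_sW (A : MPMat n) : ∀ (W : List (Fin n)), W ≠ [] → ∀ d : Fin n,
    walkWeight A W = sW A (fun s => W.getD s d) (W.length - 1) := by
  intro W
  induction W with
  | nil => intro h; exact absurd rfl h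
  | cons a l ih =>
    intro _ d
    cases l with
    | nil => simp [walkWeight, sW]
    | cons b l' =>
      have hW : walkWeight A (a :: b :: l') = A a b + walkWeight A (b :: l') := by
        simp [walkWeight]
      rw [hW, ih (by simp) d]
      have hlen : (a :: b :: l').length - 1 = ((b :: l').length - 1) + 1 := by simp
      rw [hlen, sW_succ_left]
      have : sW A (fun s => (b :: l').getD s d) ((b :: l').length - 1)
          = sW A (fun s => (a :: b :: l').getD (s+1) d) ((b :: l').length - 1) :=
        sW_congr fun s _ => by simp
      rw [this]
      rfl

lemma isWalkIn_ofSeq {G : SubD n} {f : ℕ → Fin n} {t : ℕ} (h : SWalk G f t) :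
    IsWalkIn G (ofSeq f t) := by
  refine ⟨ofSeq_ne_nil f t, ?_, ?_⟩
  · intro v hv
    rw [mem_iff_getD (f 0)] at hv
    obtain ⟨s, hs, hval⟩ := hv
    rw [ofSeq_length] at hs
    rw [getD_ofSeq (by omega) (f 0)] at hval
    exact hval ▸ h.1 s (by omega)
  · rw [chain'_iff_getD (f 0)]
    intro s hs
    rw [ofSeq_length] at hs
    rw [getD_ofSeq (by omega), getD_ofSeq (by omega)]
    exact h.2 s (by omega)

lemma sWalk_of_isWalkIn {G : SubD n} {W : List (Fin n)} (h : IsWalkIn G W) (d : Fin n) :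
    SWalk G (fun s => W.getD s d) (W.length - 1) := by
  obtain ⟨hne, hverts, hchain⟩ := h
  have hlen : 1 ≤ W.length := by
    cases W with
    | nil => exact absurd rfl hne
    | cons a l => simp
  constructor
  · intro s hs
    apply hverts
    rw [mem_iff_getD d]
    exact ⟨s, by omega, rfl⟩
  · intro s hs
    rw [chain'_iff_getD d] at hchain
    exact hchain s (by omega)

lemma reachIn_iff {G : SubD n} {u v : Fin n} :
    ReachIn G u v ↔ ∃ t f, SWalk G f t ∧ f 0 = u ∧ f t = v := by
  constructor
  · rintro ⟨W, hW, hh, hl⟩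
    have hne : W ≠ [] := hW.1
    refine ⟨W.length - 1, fun s => W.getD s u, sWalk_of_isWalkIn hW u, ?_, ?_⟩
    · rw [head?_eq_getD hne u] at hh
      exact (Option.some_injective _ hh)
    · rw [getLast?_eq_getD hne u] at hl
      exact (Option.some_injective _ hl)
  · rintro ⟨t, f, hW, h0, ht⟩
    refine ⟨ofSeq f t, isWalkIn_ofSeq hW, ?_, ?_⟩
    · rw [head?_eq_getD (ofSeq_ne_nil f t) (f 0), getD_ofSeq (Nat.zero_le t), h0]
    · rw [getLast?_eq_getD (ofSeq_ne_nil f t) (f 0), ofSeq_length]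
      simp only [Nat.add_sub_cancel]
      rw [getD_ofSeq (le_refl t), ht]

lemma closedWalk_iff {G : SubD n} {u : Fin n} {l : ℕ} :
    (∃ W, IsClosedWalkAt G u W ∧ elen W = l) ↔
    ∃ f, SWalk G f l ∧ f 0 = u ∧ f l = u := by
  constructor
  · rintro ⟨W, ⟨hW, hh, hl⟩, hlen⟩
    have hne : W ≠ [] := hW.1
    refine ⟨fun s => W.getD s u, hlen ▸ sWalk_of_isWalkIn hW u, ?_, ?_⟩
    · rw [head?_eq_getD hne u] at hh
      exact Option.some_injective _ hh
    · rw [getLast?_eq_getD hne u] at hl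
      have h5 := Option.some_injective _ hl
      show W.getD l u = u
      rw [← hlen]
      exact h5
  · rintro ⟨f, hW, h0, hl⟩
    refine ⟨ofSeq f l, ⟨isWalkIn_ofSeq hW, ?_, ?_⟩, by simp [elen, ofSeq_length]⟩
    · rw [head?_eq_getD (ofSeq_ne_nil f l) (f 0), getD_ofSeq (Nat.zero_le l), h0]
    · rw [getLast?_eq_getD (ofSeq_ne_nil f l) (f 0), ofSeq_length]
      simp only [Nat.add_sub_cancel]
      rw [getD_ofSeq (le_refl l), hl]

end MaxPlus
end SecC
section SecC2
namespace MaxPlus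
variable {n : ℕ}

lemma elen_ofSeq (f : ℕ → Fin n) (t : ℕ) : elen (ofSeq f t) = t := by
  simp [elen, ofSeq_length]

lemma walkWeight_ofSeq (A : MPMat n) (f : ℕ → Fin n) (t : ℕ) :
    walkWeight A (ofSeq f t) = sW A f t := by
  rw [walkWeight_eq_sW A _ (ofSeq_ne_nil f t) (f 0), ofSeq_length]
  simp only [Nat.add_sub_cancel]
  exact sW_congr fun s hs => getD_ofSeq hs (f 0)

lemma isCycleIn_ofSeq {G : SubD n} {f : ℕ → Fin n} {t : ℕ} (h1 : 1 ≤ t)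
    (hW : SWalk G f t) (hc : f t = f 0)
    (hinj : ∀ r r', r < t → r' < t → f r = f r' → r = r') :
    IsCycleIn G (ofSeq f t) := by
  refine ⟨isWalkIn_ofSeq hW, ?_, ?_, ?_⟩
  · rw [ofSeq_length]; omega
  · rw [head?_eq_getD (ofSeq_ne_nil f t) (f 0), getLast?_eq_getD (ofSeq_ne_nil f t) (f 0),
      ofSeq_length]
    simp only [Nat.add_sub_cancel]
    rw [getD_ofSeq (Nat.zero_le t) (f 0), getD_ofSeq (le_refl t) (f 0), hc]
  · have heq : ofSeq f t = (List.range t).map f ++ [f t] := by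
      rw [ofSeq, List.range_succ, List.map_append]; rfl
    rw [heq, List.dropLast_concat]
    refine List.Nodup.map_on ?_ List.nodup_range
    intro x hx y hy hxy
    rw [List.mem_range] at hx hy
    exact hinj x y hx hy hxy

lemma cycle_seq {G : SubD n} {W : List (Fin n)} (h : IsCycleIn G W) :
    ∃ (f : ℕ → Fin n) (m : ℕ), 1 ≤ m ∧ m ≤ n ∧ W.length = m + 1 ∧ f m = f 0 ∧ SWalk G f m ∧
      (∀ A : MPMat n, walkWeight A W = sW A f m) ∧
      (∀ s < m, (f s, f (s+1)) ∈ W.zip W.tail) ∧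
      (∀ x y : Fin n, (x, y) ∈ W.zip W.tail → ∃ s < m, f s = x ∧ f (s+1) = y) ∧
      (∀ v ∈ W, ∃ s < m, f s = v) ∧ (∀ s ≤ m, f s ∈ W) := by
  obtain ⟨hW, hlen2, hhl, hnd⟩ := h
  have hne : W ≠ [] := hW.1
  set d := W.head hne with hd
  set m := W.length - 1 with hm
  have hlen : W.length = m + 1 := by
    have : 1 ≤ W.length := by omega
    omega
  have h1m : 1 ≤ m := by omega
  have hmn : m ≤ n := by
    have h3 : W.dropLast.Nodup := hnd
    have h4 := List.Nodup.length_le_card h3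
    rw [List.length_dropLast, Fintype.card_fin] at h4
    omega
  refine ⟨fun s => W.getD s d, m, h1m, hmn, hlen, ?_, sWalk_of_isWalkIn hW d, ?_, ?_, ?_, ?_, ?_⟩
  · rw [head?_eq_getD hne d] at hhl
    rw [getLast?_eq_getD hne d] at hhl
    exact (Option.some_injective _ hhl.symm)
  · intro A; exact walkWeight_eq_sW A W hne d
  · intro s hs
    rw [zip_tail_mem_iff d]
    exact ⟨s, by omega, rfl, rfl⟩
  · intro x y hxy
    rw [zip_tail_mem_iff d] at hxy
    obtain ⟨s, hs, h1, h2⟩ := hxy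
    exact ⟨s, by omega, h1, h2⟩
  · intro v hv
    rw [mem_iff_getD d] at hv
    obtain ⟨s, hs, hval⟩ := hv
    by_cases hsm : s = m
    · refine ⟨0, by omega, ?_⟩
      have hc : W.getD m d = W.getD 0 d := by
        rw [head?_eq_getD hne d, getLast?_eq_getD hne d] at hhl
        have := Option.some_injective _ hhl
        rw [← this]
      rw [← hval, hsm, hc]
    · exact ⟨s, by omega, hval⟩
  · intro s hs
    rw [mem_iff_getD d]
    exact ⟨s, by omega, rfl⟩

lemma periodic_step {f : ℕ → Fin n} {m : ℕ} (h1 : 1 ≤ m) (hc : f m = f 0) (r : ℕ) :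
    f ((r+1) % m) = f ((r % m) + 1) := by
  rcases eq_or_lt_of_le h1 with h|h
  · have hm1 : m = 1 := h.symm
    subst hm1
    simp only [Nat.mod_one]
    rw [show f 1 = f 0 from hc]
  · have h2 : 2 ≤ m := h
    have hq : r % m < m := Nat.mod_lt _ (by omega)
    have hmod : (r+1) % m = (r % m + 1) % m := by
      conv_lhs => rw [Nat.add_mod]
      rw [Nat.mod_eq_of_lt (show 1 < m by omega)]
    rw [hmod]
    rcases eq_or_lt_of_le (Nat.succ_le_of_lt hq) with he|hl
    · have hE : r % m + 1 = m := he
      rw [hE, Nat.mod_self]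
      exact hc.symm
    · rw [Nat.mod_eq_of_lt hl]

lemma SWalk_mod {G : SubD n} {f : ℕ → Fin n} {m : ℕ} (h1 : 1 ≤ m) (hc : f m = f 0)
    (hw : SWalk G f m) (s0 t : ℕ) : SWalk G (fun r => f ((s0 + r) % m)) t := by
  constructor
  · intro s _
    exact hw.1 _ (le_of_lt (Nat.mod_lt _ (by omega)))
  · intro s _
    show G.edge (f ((s0 + s) % m)) (f ((s0 + (s+1)) % m))
    have heq : s0 + (s + 1) = (s0 + s) + 1 := by omega
    rw [heq, periodic_step h1 hc (s0 + s)]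
    exact hw.2 _ (Nat.mod_lt _ (by omega))

end MaxPlus
end SecC2
section SecD
namespace MaxPlus
variable {n : ℕ}

lemma reachIn_of_swalk {G : SubD n} {f : ℕ → Fin n} {t : ℕ} (h : SWalk G f t) :
    ReachIn G (f 0) (f t) := reachIn_iff.2 ⟨t, f, h, rfl, rfl⟩

lemma reachIn_refl {G : SubD n} {v : Fin n} (h : v ∈ G.verts) : ReachIn G v v :=
  reachIn_iff.2 ⟨0, fun _ => v, ⟨fun _ _ => h, fun s hs => absurd hs (Nat.not_lt_zero s)⟩, rfl, rfl⟩

lemma reachIn_trans {G : SubD n} {u v w : Fin n} (h1 : ReachIn G u v) (h2 : ReachIn G v w) :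
    ReachIn G u w := by
  rw [reachIn_iff] at h1 h2 ⊢
  obtain ⟨t1, f1, hw1, h10, h1t⟩ := h1
  obtain ⟨t2, f2, hw2, h20, h2t⟩ := h2
  refine ⟨t1 + t2, scat f1 t1 f2, hw1.scat hw2 (by rw [h1t, h20]), ?_, ?_⟩
  · rw [scat_left (Nat.zero_le t1), h10]
  · rw [show t1 + t2 = t1 + t2 from rfl, scat_right (by rw [h1t, h20]) t2, h2t]

lemma reachIn_mem_left {G : SubD n} {u v : Fin n} (h : ReachIn G u v) : u ∈ G.verts := by
  rw [reachIn_iff] at h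
  obtain ⟨t, f, hw, h0, _⟩ := h
  exact h0 ▸ hw.1 0 (Nat.zero_le t)

lemma reachIn_mem_right {G : SubD n} {u v : Fin n} (h : ReachIn G u v) : v ∈ G.verts := by
  rw [reachIn_iff] at h
  obtain ⟨t, f, hw, _, ht⟩ := h
  exact ht ▸ hw.1 t (le_refl t)

lemma sccEq_refl {G : SubD n} {v : Fin n} (h : v ∈ G.verts) : SccEq G v v :=
  ⟨reachIn_refl h, reachIn_refl h⟩

lemma sccEq_symm {G : SubD n} {u v : Fin n} (h : SccEq G u v) : SccEq G v u := ⟨h.2, h.1⟩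

lemma sccEq_trans {G : SubD n} {u v w : Fin n} (h1 : SccEq G u v) (h2 : SccEq G v w) :
    SccEq G u w := ⟨reachIn_trans h1.1 h2.1, reachIn_trans h2.2 h1.2⟩

lemma mem_sccOf_iff {G : SubD n} {u v : Fin n} : v ∈ sccOf G u ↔ SccEq G u v := Iff.rfl

variable (A : MPMat n) (lam : ℝ)

lemma crit_cycle_seq {W : List (Fin n)} (hc : IsCycleIn (digr A) W) (hm : meanIs A W lam) :
    ∃ (f : ℕ → Fin n) (m : ℕ), 1 ≤ m ∧ m ≤ n ∧ f m = f 0 ∧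
      (∀ s < m, critEdges A lam (f s) (f (s+1))) ∧
      (∀ s ≤ m, f s ∈ critNodes A lam) ∧
      (∀ v ∈ W, ∃ s < m, f s = v) ∧
      (∀ x y : Fin n, (x, y) ∈ W.zip W.tail → ∃ s < m, f s = x ∧ f (s+1) = y) ∧
      sW A f m = (((m : ℝ) * lam : ℝ) : WithBot ℝ) := by
  obtain ⟨f, m, h1, hmn, hlen, hcl, hw, hww, hzip, hzip', hmem, hmem'⟩ := cycle_seq hc
  refine ⟨f, m, h1, hmn, hcl, ?_, ?_, hmem, hzip', ?_⟩
  · intro s hs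
    exact ⟨W, hc, hm, hzip s hs⟩
  · intro s hs
    exact ⟨W, hc, hm, hmem' s hs⟩
  · rw [← hww A]
    rw [meanIs] at hm
    rw [hm]
    congr 2
    rw [elen, hlen]
    simp

lemma crit_closed_seq {u : Fin n} (hu : u ∈ critNodes A lam) :
    ∃ (f : ℕ → Fin n) (m : ℕ), 1 ≤ m ∧ m ≤ n ∧ f 0 = u ∧ f m = u ∧
      SWalk (critSub A lam) f m := by
  obtain ⟨W, hc, hm, hv⟩ := hu
  obtain ⟨f, m, h1, hmn, hcl, hedge, hnode, hmem, -, -⟩ := crit_cycle_seq A lam hc hm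
  obtain ⟨s, hs, hfs⟩ := hmem u hv
  have hswalk : SWalk (critSub A lam) f m :=
    ⟨fun r hr => hnode r hr, fun r hr => hedge r hr⟩
  refine ⟨fun r => f ((s + r) % m), m, h1, hmn, ?_, ?_, SWalk_mod h1 hcl hswalk s m⟩
  · show f ((s + 0) % m) = u
    rw [Nat.add_zero, Nat.mod_eq_of_lt hs, hfs]
  · show f ((s + m) % m) = u
    rw [Nat.add_mod_right, Nat.mod_eq_of_lt hs, hfs]

lemma critEdge_seq {u v : Fin n} (h : critEdges A lam u v) :
    ∃ (f : ℕ → Fin n) (m : ℕ) (s : ℕ), 1 ≤ m ∧ s < m ∧ f s = u ∧ f (s+1) = v ∧ f m = f 0 ∧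
      (∀ r < m, critEdges A lam (f r) (f (r+1))) ∧ (∀ r ≤ m, f r ∈ critNodes A lam) ∧
      sW A f m = (((m : ℝ) * lam : ℝ) : WithBot ℝ) := by
  obtain ⟨W, hc, hm, hzip⟩ := h
  obtain ⟨f, m, h1, hmn, hcl, hedge, hnode, hmem, hzip', hsw⟩ := crit_cycle_seq A lam hc hm
  obtain ⟨s, hs, hfs, hfs1⟩ := hzip' u v hzip
  exact ⟨f, m, s, h1, hs, hfs, hfs1, hcl, hedge, hnode, hsw⟩

lemma critEdges_mem_left {u v : Fin n} (h : critEdges A lam u v) : u ∈ critNodes A lam := by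
  obtain ⟨f, m, s, h1, hs, hfs, _, _, _, hnode, _⟩ := critEdge_seq A lam h
  exact hfs ▸ hnode s (by omega)

lemma critEdges_mem_right {u v : Fin n} (h : critEdges A lam u v) : v ∈ critNodes A lam := by
  obtain ⟨f, m, s, h1, hs, _, hfs1, _, _, hnode, _⟩ := critEdge_seq A lam h
  exact hfs1 ▸ hnode (s+1) (by omega)

lemma critEdges_sccEq {u v : Fin n} (h : critEdges A lam u v) :
    SccEq (critSub A lam) u v := by
  obtain ⟨f, m, s, h1, hs, hfs, hfs1, hcl, hedge, hnode, _⟩ := critEdge_seq A lam h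
  have hswalk : SWalk (critSub A lam) f m := ⟨fun r hr => hnode r hr, fun r hr => hedge r hr⟩
  constructor
  · -- u → v : one step
    have hw := SWalk_mod h1 hcl hswalk s 1
    have := reachIn_of_swalk hw
    simp only [Nat.add_zero] at this
    rw [Nat.mod_eq_of_lt hs, hfs] at this
    have he : f ((s + 1) % m) = v := by
      by_cases hsm : s + 1 = m
      · rw [hsm, Nat.mod_self, ← hcl, ← hfs1, hsm]
      · rw [Nat.mod_eq_of_lt (by omega), hfs1]
    rwa [he] at this
  · -- v → u : m - 1 steps
    have hw := SWalk_mod h1 hcl hswalk (s+1) (m-1)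
    have := reachIn_of_swalk hw
    simp only [Nat.add_zero] at this
    have he : f ((s + 1) % m) = v := by
      by_cases hsm : s + 1 = m
      · rw [hsm, Nat.mod_self, ← hcl, ← hfs1, hsm]
      · rw [Nat.mod_eq_of_lt (by omega), hfs1]
    have he2 : f ((s + 1 + (m-1)) % m) = u := by
      have : s + 1 + (m - 1) = s + m := by omega
      rw [this, Nat.add_mod_right, Nat.mod_eq_of_lt hs, hfs]
    rwa [he, he2] at this

lemma critEdges_ne_bot {u v : Fin n} (h : critEdges A lam u v) : A u v ≠ ⊥ := by
  obtain ⟨f, m, s, h1, hs, hfs, hfs1, _, _, _, hsw⟩ := critEdge_seq A lam h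
  have hnb : sW A f m ≠ ⊥ := by rw [hsw]; exact WithBot.coe_ne_bot
  have := sW_ne_bot hnb s hs
  rwa [hfs, hfs1] at this

lemma sccOf_subset_crit {x : Fin n} :
    sccOf (critSub A lam) x ⊆ critNodes A lam := by
  intro v hv
  exact reachIn_mem_right hv.1

lemma crit_out_edge {u : Fin n} (hu : u ∈ critNodes A lam) :
    ∃ w, critEdges A lam u w ∧ SccEq (critSub A lam) u w := by
  obtain ⟨W, hc, hm, hv⟩ := hu
  obtain ⟨f, m, h1, hmn, hcl, hedge, hnode, hmem, -, -⟩ := crit_cycle_seq A lam hc hm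
  obtain ⟨s, hs, hfs⟩ := hmem u hv
  have he := hedge s hs
  rw [hfs] at he
  exact ⟨f (s+1), he, critEdges_sccEq A lam he⟩

lemma scc_step {x : Fin n} {v : Fin n} (hv : v ∈ sccOf (critSub A lam) x) :
    ∃ w ∈ sccOf (critSub A lam) x, (sccSub (critSub A lam) x).edge v w := by
  have hvc : v ∈ critNodes A lam := sccOf_subset_crit A lam hv
  obtain ⟨w, he, hscc⟩ := crit_out_edge A lam hvc
  have hw : w ∈ sccOf (critSub A lam) x := sccEq_trans hv hscc
  exact ⟨w, hw, he, hv, hw⟩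

lemma scc_walk_any_length {x u : Fin n} (hu : u ∈ sccOf (critSub A lam) x) (z : ℕ) :
    ∃ f, SWalk (sccSub (critSub A lam) x) f z ∧ f 0 = u := by
  classical
  set S := sccOf (critSub A lam) x with hS
  have hstep : ∀ v : {v // v ∈ S}, ∃ w : {v // v ∈ S},
      (sccSub (critSub A lam) x).edge v.1 w.1 := by
    rintro ⟨v, hv⟩
    obtain ⟨w, hw, he⟩ := scc_step A lam hv
    exact ⟨⟨w, hw⟩, he⟩
  choose st hst using hstep
  let F : ℕ → {v // v ∈ S} := fun s => Nat.rec ⟨u, hu⟩ (fun _ p => st p) s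
  refine ⟨fun s => (F s).1, ⟨?_, ?_⟩, rfl⟩
  · intro s _
    exact (F s).2
  · intro s _
    exact hst (F s)

lemma walk_in_scc {x : Fin n} {f : ℕ → Fin n} {t : ℕ}
    (hw : SWalk (critSub A lam) f t) (h0 : f 0 ∈ sccOf (critSub A lam) x)
    (ht : f t ∈ sccOf (critSub A lam) x) :
    SWalk (sccSub (critSub A lam) x) f t := by
  have hmem : ∀ s ≤ t, f s ∈ sccOf (critSub A lam) x := by
    intro s hs
    have h1 : ReachIn (critSub A lam) (f 0) (f s) := by
      have := reachIn_of_swalk (hw.restrict hs)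
      exact this
    have h2 : ReachIn (critSub A lam) (f s) (f t) := by
      have hw2 : SWalk (critSub A lam) f (s + (t - s)) := by
        rwa [show s + (t - s) = t by omega]
      have hre := reachIn_of_swalk hw2.shift
      simp only [Nat.add_zero] at hre
      rwa [show s + (t - s) = t by omega] at hre
    refine sccEq_trans h0 ⟨h1, ?_⟩
    exact reachIn_trans h2 (reachIn_trans ht.2 h0.1)
  refine ⟨hmem, ?_⟩
  intro s hs
  exact ⟨hw.2 s hs, hmem s (by omega), hmem (s+1) hs⟩

lemma swalk_scc_to_crit {x : Fin n} {f : ℕ → Fin n} {t : ℕ}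
    (hw : SWalk (sccSub (critSub A lam) x) f t) : SWalk (critSub A lam) f t :=
  ⟨fun s hs => sccOf_subset_crit A lam (hw.1 s hs), fun s hs => (hw.2 s hs).1⟩

end MaxPlus
end SecD
section SecE
namespace MaxPlus

lemma setGcd_master (S M : Set ℕ) (hSM : S ⊆ M) (h0 : (0:ℕ) ∈ M)
    (hadd : ∀ a ∈ M, ∀ b ∈ M, a + b ∈ M) :
    (∀ s ∈ S, setGcd S ∣ s) ∧ (∀ e : ℕ, (∀ s ∈ S, e ∣ s) → e ∣ setGcd S) ∧
    (∃ p ∈ M, ∃ q ∈ M, p = q + setGcd S) := by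
  classical
  set H : AddSubgroup ℤ := AddSubgroup.closure ((fun s : ℕ => (s : ℤ)) '' S) with hH
  obtain ⟨a, ha⟩ := Int.subgroup_cyclic H
  set g := a.natAbs with hg
  have hdvd : ∀ s ∈ S, g ∣ s := by
    intro s hs
    have hmem : (s : ℤ) ∈ H := AddSubgroup.subset_closure ⟨s, hs, rfl⟩
    rw [ha, AddSubgroup.mem_closure_singleton] at hmem
    obtain ⟨k, hk⟩ := hmem
    have : a ∣ (s : ℤ) := ⟨k, by rw [← hk, zsmul_eq_mul]; push_cast; ring⟩
    have h2 := Int.natAbs_dvd_natAbs.2 this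
    simpa using h2
  have hcd : ∀ e : ℕ, (∀ s ∈ S, e ∣ s) → e ∣ g := by
    intro e he
    have haH : a ∈ H := by
      rw [ha]; exact AddSubgroup.subset_closure rfl
    have hle : H ≤ AddSubgroup.closure {(e : ℤ)} := by
      rw [hH]
      apply AddSubgroup.closure_le _ |>.2
      rintro z ⟨s, hs, rfl⟩
      rw [SetLike.mem_coe, AddSubgroup.mem_closure_singleton]
      obtain ⟨c, hc⟩ := he s hs
      exact ⟨c, by rw [zsmul_eq_mul]; push_cast [hc]; ring⟩
    have := hle haH
    rw [AddSubgroup.mem_closure_singleton] at this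
    obtain ⟨k, hk⟩ := this
    have : (e : ℤ) ∣ a := ⟨k, by rw [← hk, zsmul_eq_mul]; push_cast; ring⟩
    have h2 := Int.natAbs_dvd_natAbs.2 this
    simpa using h2
  have hgset : setGcd S = g := by
    have hTmem : g ∈ {d | (∀ s ∈ S, d ∣ s) ∧ ∀ e, (∀ s ∈ S, e ∣ s) → e ∣ d} := ⟨hdvd, hcd⟩
    have hT : {d | (∀ s ∈ S, d ∣ s) ∧ ∀ e, (∀ s ∈ S, e ∣ s) → e ∣ d} = {g} := by
      apply Set.eq_singleton_iff_unique_mem.2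
      refine ⟨hTmem, ?_⟩
      rintro d ⟨hd1, hd2⟩
      exact Nat.dvd_antisymm (hcd d hd1) (hd2 g hdvd)
    rw [setGcd, hT]
    exact csInf_singleton g
  rw [hgset]
  refine ⟨hdvd, hcd, ?_⟩
  -- the p - q representation
  set D : AddSubgroup ℤ :=
    { carrier := {z : ℤ | ∃ p ∈ M, ∃ q ∈ M, z = (p:ℤ) - q},
      zero_mem' := ⟨0, h0, 0, h0, by simp⟩,
      add_mem' := by
        rintro a b ⟨p1, hp1, q1, hq1, rfl⟩ ⟨p2, hp2, q2, hq2, rfl⟩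
        exact ⟨p1+p2, hadd _ hp1 _ hp2, q1+q2, hadd _ hq1 _ hq2, by push_cast; ring⟩,
      neg_mem' := by
        rintro a ⟨p, hp, q, hq, rfl⟩
        exact ⟨q, hq, p, hp, by ring⟩ } with hD
  have hHD : H ≤ D := by
    rw [hH]
    apply AddSubgroup.closure_le _ |>.2
    rintro z ⟨s, hs, rfl⟩
    exact ⟨s, hSM hs, 0, h0, by simp⟩
  have haD : a ∈ D := hHD (by rw [ha]; exact AddSubgroup.subset_closure rfl)
  have hgD : (g : ℤ) ∈ D := by
    rcases Int.natAbs_eq a with h | h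
    · rw [hg, ← h]; exact haD
    · rw [hg]
      have : ((a.natAbs : ℤ)) = -a := by omega
      rw [this]
      exact neg_mem haD
  obtain ⟨p, hp, q, hq, hpq⟩ := hgD
  exact ⟨p, hp, q, hq, by omega⟩

lemma nsmul_mem_M (M : Set ℕ) (h0 : (0:ℕ) ∈ M) (hadd : ∀ a ∈ M, ∀ b ∈ M, a + b ∈ M) :
    ∀ (k : ℕ), ∀ x ∈ M, k * x ∈ M := by
  intro k
  induction k with
  | zero => intro x _; simpa using h0
  | succ k ih =>
    intro x hx
    have : (k + 1) * x = k * x + x := by ring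
    rw [this]
    exact hadd _ (ih x hx) _ hx

lemma eventual_multiples (S M : Set ℕ) (hSM : S ⊆ M) (h0 : (0:ℕ) ∈ M)
    (hadd : ∀ a ∈ M, ∀ b ∈ M, a + b ∈ M) (hMS : ∀ m ∈ M, m ≠ 0 → m ∈ S) :
    ∃ N, ∀ m, setGcd S ∣ m → N ≤ m → m ∈ M := by
  obtain ⟨hdvd, hcd, p, hp, q, hq, hpq⟩ := setGcd_master S M hSM h0 hadd
  set g := setGcd S with hgdef
  have hgM : ∀ m ∈ M, g ∣ m := by
    intro m hm
    rcases Nat.eq_zero_or_pos m with h|h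
    · simp [h]
    · exact hdvd m (hMS m hm (by omega))
  by_cases hg0 : g = 0
  · refine ⟨0, ?_⟩
    intro m hdm _
    rw [hg0] at hdm
    rw [Nat.eq_zero_of_zero_dvd hdm]
    exact h0
  have hg : 0 < g := Nat.pos_of_ne_zero hg0
  by_cases hq0 : q = 0
  · -- g = p ∈ M, all multiples of g are in M
    refine ⟨0, ?_⟩
    intro m hdm _
    obtain ⟨k, hk⟩ := hdm
    rw [hk, Nat.mul_comm]
    apply nsmul_mem_M M h0 hadd
    have : p = g := by omega
    exact this ▸ hp
  have hqpos : 0 < q := Nat.pos_of_ne_zero hq0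
  have hgq : g ∣ q := hgM q hq
  obtain ⟨q', hq'⟩ := hgq
  have hq'pos : 0 < q' := by
    rcases Nat.eq_zero_or_pos q' with h|h
    · rw [h, Nat.mul_zero] at hq'; omega
    · exact h
  refine ⟨p * q', ?_⟩
  intro m hdm hge
  obtain ⟨e, he⟩ := hdm
  set i := e % q' with hi
  have hiq : i < q' := Nat.mod_lt _ hq'pos
  set d := e / q' with hd
  have hed : e = q' * d + i := by rw [hi, hd]; exact (Nat.div_add_mod e q').symm
  have hm2 : m = q * d + g * i := by
    rw [he, hed, hq']; ring
  have hppos : 0 < p := by omega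
  rw [hpq] at hge
  have hdi : i ≤ d := by
    by_contra hcon
    push_neg at hcon
    have hd1 : d + 1 ≤ i := hcon
    have h4 : i + 1 ≤ q' := by omega
    have e1 : q * (d+1) ≤ q * i := Nat.mul_le_mul_left q hd1
    have e2 : g * (i+1) ≤ g * q' := Nat.mul_le_mul_left g h4
    have e3 : q * i ≤ q * q' := Nat.mul_le_mul_left q (by omega)
    have h3 : q * d + g * i + q + g ≤ (q + g) * q' := by nlinarith
    linarith [hm2.le, hge, hg, hqpos]
  obtain ⟨j, hj⟩ : ∃ j, d = i + j := ⟨d - i, by omega⟩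
  have hmij : m = i * p + j * q := by
    rw [hm2, hj, hpq]; ring
  rw [hmij]
  exact hadd _ (nsmul_mem_M M h0 hadd i p hp) _ (nsmul_mem_M M h0 hadd j q hq)

end MaxPlus
end SecE
section SecE2
namespace MaxPlus
variable {n : ℕ} (A : MPMat n) (lam : ℝ)

lemma sccCyclicity_eq_seq (G : SubD n) (u : Fin n) :
    sccCyclicity G u = setGcd {l | 0 < l ∧ ∃ f, SWalk G f l ∧ f 0 = u ∧ f l = u} := by
  rw [sccCyclicity]
  congr 1
  ext l
  simp only [Set.mem_setOf_eq]
  constructor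
  · rintro ⟨hl, W, hW, hlen⟩
    exact ⟨hl, closedWalk_iff.1 ⟨W, hW, hlen⟩⟩
  · rintro ⟨hl, hf⟩
    exact ⟨hl, closedWalk_iff.2 hf⟩

lemma crit_cyc_facts {u : Fin n} (hu : u ∈ critNodes A lam) :
    (∀ (l : ℕ) (f : ℕ → Fin n), SWalk (critSub A lam) f l → f 0 = u → f l = u →
        sccCyclicity (critSub A lam) u ∣ l) ∧
    (∀ e : ℕ, (∀ (l : ℕ) (f : ℕ → Fin n), 0 < l → SWalk (critSub A lam) f l → f 0 = u →
        f l = u → e ∣ l) → e ∣ sccCyclicity (critSub A lam) u) ∧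
    0 < sccCyclicity (critSub A lam) u ∧ sccCyclicity (critSub A lam) u ≤ n ∧
    ∃ N, ∀ m, sccCyclicity (critSub A lam) u ∣ m → N ≤ m →
        ∃ f, SWalk (critSub A lam) f m ∧ f 0 = u ∧ f m = u := by
  classical
  set S := {l | 0 < l ∧ ∃ f, SWalk (critSub A lam) f l ∧ f 0 = u ∧ f l = u} with hSdef
  set M := {l : ℕ | ∃ f, SWalk (critSub A lam) f l ∧ f 0 = u ∧ f l = u} with hMdef
  have hSM : S ⊆ M := fun l hl => hl.2
  have h0 : (0:ℕ) ∈ M :=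
    ⟨fun _ => u, ⟨fun _ _ => hu, fun s hs => absurd hs (Nat.not_lt_zero s)⟩, rfl, rfl⟩
  have hadd : ∀ a ∈ M, ∀ b ∈ M, a + b ∈ M := by
    rintro a ⟨f, hf, hf0, hfa⟩ b ⟨g, hg, hg0, hgb⟩
    refine ⟨scat f a g, hf.scat hg (by rw [hfa, hg0]), ?_, ?_⟩
    · rw [scat_left (Nat.zero_le a), hf0]
    · rw [scat_right (by rw [hfa, hg0]) b, hgb]
  have hMS : ∀ m ∈ M, m ≠ 0 → m ∈ S := fun m hm h => ⟨Nat.pos_of_ne_zero h, hm⟩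
  obtain ⟨hdvd, hcd, -⟩ := setGcd_master S M hSM h0 hadd
  obtain ⟨N, hN⟩ := eventual_multiples S M hSM h0 hadd hMS
  rw [sccCyclicity_eq_seq, ← hSdef]
  obtain ⟨f0, m0, h1m0, hm0n, hf00, hf0m, hw0⟩ := crit_closed_seq A lam hu
  have hm0S : m0 ∈ S := ⟨h1m0, f0, hw0, hf00, hf0m⟩
  have hpos : 0 < setGcd S := by
    have hd := hdvd m0 hm0S
    rcases Nat.eq_zero_or_pos (setGcd S) with h|h
    · rw [h] at hd
      have := Nat.eq_zero_of_zero_dvd hd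
      omega
    · exact h
  refine ⟨?_, ?_, hpos, ?_, N, fun m hd hNm => (hN m hd hNm : m ∈ M)⟩
  · intro l f hw h0' hl'
    rcases Nat.eq_zero_or_pos l with h|h
    · simp [h]
    · exact hdvd l ⟨h, f, hw, h0', hl'⟩
  · intro e he
    apply hcd
    rintro l ⟨hl, f, hw, h0', hl'⟩
    exact he l f hl hw h0' hl'
  · exact le_trans (Nat.le_of_dvd h1m0 (hdvd m0 hm0S)) hm0n

lemma scc_cyc_const {u v : Fin n} (hu : u ∈ critNodes A lam)
    (huv : SccEq (critSub A lam) u v) :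
    sccCyclicity (critSub A lam) u = sccCyclicity (critSub A lam) v := by
  have hv : v ∈ critNodes A lam := reachIn_mem_right huv.1
  have key : ∀ (a b : Fin n), a ∈ critNodes A lam → SccEq (critSub A lam) a b →
      sccCyclicity (critSub A lam) b ∣ sccCyclicity (critSub A lam) a := by
    intro a b ha hab
    have hb : b ∈ critNodes A lam := reachIn_mem_right hab.1
    obtain ⟨hdvd_b, -, -, -, -⟩ := crit_cyc_facts A lam hb
    obtain ⟨-, hcd_a, -, -, -⟩ := crit_cyc_facts A lam ha
    apply hcd_a
    intro l f hl hw h0' hl'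
    obtain ⟨tp, fp, hwp, hp0, hpt⟩ := reachIn_iff.1 hab.2
    obtain ⟨tq, fq, hwq, hq0, hqt⟩ := reachIn_iff.1 hab.1
    -- fp : b → a, f : a → a (length l), fq : a → b
    have hm1 : fp tp = f 0 := by rw [hpt, h0']
    have hm2 : f l = fq 0 := by rw [hl', hq0]
    have hm3 : fp tp = fq 0 := by rw [hpt, hq0]
    have w1 : SWalk (critSub A lam) (scat fp tp (scat f l fq)) (tp + (l + tq)) :=
      hwp.scat (hw.scat hwq hm2) (by rw [hm1]; exact (scat_left (Nat.zero_le l)).symm ▸ rfl)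
    have w2 : SWalk (critSub A lam) (scat fp tp fq) (tp + tq) := hwp.scat hwq hm3
    have e1 : sccCyclicity (critSub A lam) b ∣ tp + (l + tq) := by
      apply hdvd_b _ _ w1
      · rw [scat_left (Nat.zero_le tp), hp0]
      · have hh : scat f l fq 0 = f 0 := scat_left (Nat.zero_le l)
        have := scat_right (f := fp) (g := scat f l fq) (by rw [hm1, ← hh]) (l + tq)
        rw [this]
        rw [scat_right hm2 tq, hqt]
    have e2 : sccCyclicity (critSub A lam) b ∣ tp + tq := by
      apply hdvd_b _ _ w2
      · rw [scat_left (Nat.zero_le tp), hp0]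
      · rw [scat_right hm3 tq, hqt]
    have := Nat.dvd_sub e1 e2
    have heq : tp + (l + tq) - (tp + tq) = l := by omega
    rwa [heq] at this
  exact Nat.dvd_antisymm (key v u hv (sccEq_symm huv)) (key u v hu huv)

lemma sccCyclicity_sccSub {x v : Fin n} (hv : v ∈ sccOf (critSub A lam) x) :
    sccCyclicity (sccSub (critSub A lam) x) v = sccCyclicity (critSub A lam) v := by
  rw [sccCyclicity_eq_seq, sccCyclicity_eq_seq]
  congr 1
  ext l
  simp only [Set.mem_setOf_eq]
  constructor
  · rintro ⟨hl, f, hw, h0', hl'⟩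
    exact ⟨hl, f, swalk_scc_to_crit A lam hw, h0', hl'⟩
  · rintro ⟨hl, f, hw, h0', hl'⟩
    exact ⟨hl, f, walk_in_scc A lam hw (h0' ▸ hv) (hl' ▸ hv), h0', hl'⟩

lemma graphCyclicity_sccSub {x : Fin n} (hx : x ∈ critNodes A lam) :
    graphCyclicity (sccSub (critSub A lam) x) = sccCyclicity (critSub A lam) x := by
  obtain ⟨-, -, hγpos, -, -⟩ := crit_cyc_facts A lam hx
  set γ := sccCyclicity (critSub A lam) x with hγ
  have hxscc : x ∈ sccOf (critSub A lam) x := sccEq_refl (hx : x ∈ (critSub A lam).verts)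
  have hset : {c | ∃ v ∈ (sccSub (critSub A lam) x).verts,
      c = sccCyclicity (sccSub (critSub A lam) x) v ∧ 0 < c} = {γ} := by
    ext c
    simp only [Set.mem_setOf_eq, Set.mem_singleton_iff]
    constructor
    · rintro ⟨v, hv, rfl, hcpos⟩
      rw [sccCyclicity_sccSub A lam hv, ← scc_cyc_const A lam hx hv]
    · rintro rfl
      refine ⟨x, hxscc, ?_, hγpos⟩
      rw [sccCyclicity_sccSub A lam hxscc]
  rw [graphCyclicity, hset, setLcm]
  have hγmem : γ ∈ {m | 0 < m ∧ ∀ s ∈ ({γ} : Set ℕ), s ∣ m} := by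
    refine ⟨hγpos, ?_⟩
    rintro s hs
    rw [Set.mem_singleton_iff] at hs
    rw [hs]
  apply le_antisymm (Nat.sInf_le hγmem)
  have hm := Nat.sInf_mem (⟨γ, hγmem⟩ : Set.Nonempty _)
  exact Nat.le_of_dvd hm.1 (hm.2 γ rfl)

lemma sccCyclicity_dvd_graphCyclicity {u : Fin n} (hu : u ∈ critNodes A lam) :
    sccCyclicity (critSub A lam) u ∣ graphCyclicity (critSub A lam) ∧
    0 < graphCyclicity (critSub A lam) := by
  set C := {c | ∃ v ∈ (critSub A lam).verts, c = sccCyclicity (critSub A lam) v ∧ 0 < c}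
    with hC
  have hfac : (n.factorial) ∈ {m | 0 < m ∧ ∀ s ∈ C, s ∣ m} := by
    refine ⟨Nat.factorial_pos n, ?_⟩
    rintro s ⟨v, hv, rfl, hpos⟩
    obtain ⟨-, -, -, hlen, -⟩ := crit_cyc_facts A lam hv
    exact Nat.dvd_factorial hpos hlen
  have hmem := Nat.sInf_mem (⟨_, hfac⟩ : Set.Nonempty _)
  obtain ⟨-, -, hpos, -, -⟩ := crit_cyc_facts A lam hu
  exact ⟨hmem.2 _ ⟨u, hu, rfl, hpos⟩, hmem.1⟩

end MaxPlus
end SecE2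
section SecF
namespace MaxPlus
variable {n : ℕ} (A : MPMat n) (lam : ℝ)

lemma shift_bot_iff (c : ℝ) (i j : Fin n) : shiftMat A c i j = ⊥ ↔ A i j = ⊥ := by
  rw [shiftMat, WithBot.add_eq_bot]
  simp

lemma sW_split_cycle (X : MPMat n) {f : ℕ → Fin n} {t s s' : ℕ}
    (h1 : s < s') (h2 : s' ≤ t) (heq : f s = f s') :
    sW X f t = sW X (scat f s (fun r => f (s' + r))) (s + (t - s'))
      + sW X (fun r => f (s + r)) (s' - s) := by
  have hmeet : f s = (fun r => f (s' + r)) 0 := by simp [heq]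
  rw [sW_scat X hmeet (t - s')]
  have e3 : sW X f t = sW X f s + sW X (fun r => f (s + r)) ((s' - s) + (t - s')) := by
    rw [← sW_add, show s + ((s' - s) + (t - s')) = t by omega]
  have e4 : sW X (fun r => f (s + r)) ((s' - s) + (t - s'))
      = sW X (fun r => f (s + r)) (s' - s) + sW X (fun r => f (s' + r)) (t - s') := by
    rw [sW_add]
    congr 1
    apply sW_congr
    intro r _
    show f (s + (s' - s + r)) = f (s' + r)
    congr 1
    omega
  rw [e3, e4]
  abel

lemma closed_walk_nonpos (hlam : IsMaxCycleMean A lam) :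
    ∀ (t : ℕ) (f : ℕ → Fin n), f t = f 0 → sW (shiftMat A (-lam)) f t ≤ 0 := by
  intro t
  induction t using Nat.strong_induction_on with
  | _ t ih =>
    intro f hc
    by_cases hbot : sW (shiftMat A (-lam)) f t = ⊥
    · rw [hbot]; exact bot_le
    rcases Nat.eq_zero_or_pos t with h0|hpos
    · subst h0; rw [sW_zero]
    by_cases hrep : ∃ s s', s < s' ∧ s' - s < t ∧ s' ≤ t ∧ f s = f s'
    · obtain ⟨s, s', hss, hlt, hle, heq⟩ := hrep
      rw [sW_split_cycle (shiftMat A (-lam)) hss hle heq]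
      have hinner : sW (shiftMat A (-lam)) (fun r => f (s + r)) (s' - s) ≤ 0 := by
        apply ih (s' - s) hlt
        show f (s + (s' - s)) = f (s + 0)
        rw [show s + (s' - s) = s' by omega, Nat.add_zero, heq]
      have houter : sW (shiftMat A (-lam)) (scat f s (fun r => f (s' + r))) (s + (t - s')) ≤ 0 := by
        apply ih _ (by omega)
        have hmeet : f s = (fun r => f (s' + r)) 0 := by simp [heq]
        rw [scat_right hmeet (t - s'), scat_left (Nat.zero_le s)]
        show f (s' + (t - s')) = f 0
        rw [show s' + (t - s') = t by omega, hc]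
      calc sW (shiftMat A (-lam)) (scat f s (fun r => f (s' + r))) (s + (t - s'))
            + sW (shiftMat A (-lam)) (fun r => f (s + r)) (s' - s)
          ≤ 0 + 0 := add_le_add houter hinner
        _ = 0 := add_zero 0
    · -- injective case: genuine cycle
      push_neg at hrep
      have hinj : ∀ r r', r < t → r' < t → f r = f r' → r = r' := by
        intro r r' hr hr' heq
        by_contra hne
        rcases Nat.lt_or_ge r r' with h|h
        · exact absurd heq (hrep r r' h (by omega) (by omega))
        · have h' : r' < r := by omega
          exact absurd heq.symm (hrep r' r h' (by omega) (by omega))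
      have hAedge : ∀ s < t, A (f s) (f (s+1)) ≠ ⊥ := by
        intro s hs
        have := sW_ne_bot hbot s hs
        rwa [Ne, shift_bot_iff] at this
      have hwalk : SWalk (digr A) f t :=
        ⟨fun _ _ => Set.mem_univ _, fun s hs => hAedge s hs⟩
      have hcyc : IsCycleIn (digr A) (ofSeq f t) := isCycleIn_ofSeq hpos hwalk hc hinj
      set w := rW A f t with hw
      have hsWA : sW A f t = ((w : ℝ) : WithBot ℝ) := sW_eq_coe hAedge
      set μ := w / t with hμ
      have hmean : meanIs A (ofSeq f t) μ := by
        rw [meanIs, walkWeight_ofSeq, hsWA, elen_ofSeq]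
        congr 1
        rw [hμ]
        field_simp
      have hle := hlam.2 (ofSeq f t) μ hcyc hmean
      have hwle : w ≤ t * lam := by
        rw [hμ] at hle
        have ht : (0:ℝ) < t := by exact_mod_cast hpos
        rw [div_le_iff₀ ht] at hle
        linarith [hle]
      rw [sW_shift, hsWA, ← WithBot.coe_add, show (0 : WithBot ℝ) = ((0:ℝ) : WithBot ℝ) from rfl,
        WithBot.coe_le_coe]
      nlinarith [hwle]

lemma sW_le_const {X : MPMat n} {f : ℕ → Fin n} {D : ℝ} {t : ℕ}
    (h : ∀ s < t, X (f s) (f (s+1)) ≤ ((D:ℝ) : WithBot ℝ)) :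
    sW X f t ≤ ((t * D : ℝ) : WithBot ℝ) := by
  induction t with
  | zero => simp [sW]
  | succ t ih =>
    rw [sW_succ]
    have h1 : sW X f t ≤ ((t * D : ℝ) : WithBot ℝ) := ih fun s hs => h s (by omega)
    have h2 := h t (by omega)
    calc sW X f t + X (f t) (f (t+1)) ≤ ((t * D : ℝ) : WithBot ℝ) + ((D:ℝ) : WithBot ℝ) :=
          add_le_add h1 h2
      _ = (((t+1 : ℕ) * D : ℝ) : WithBot ℝ) := by
          rw [← WithBot.coe_add]
          congr 1
          push_cast
          ring

lemma matrix_bound (X : MPMat n) : ∃ D : ℝ, 0 ≤ D ∧ ∀ i j, X i j ≤ ((D:ℝ) : WithBot ℝ) := by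
  classical
  set v := (Finset.univ : Finset (Fin n × Fin n)).sup (fun p => X p.1 p.2) ⊔ (0 : WithBot ℝ)
    with hv
  have hvbot : v ≠ ⊥ := by
    rw [hv]
    intro h
    rw [sup_eq_bot_iff] at h
    exact (by simp : (0 : WithBot ℝ) ≠ ⊥) h.2
  obtain ⟨D, hD⟩ := WithBot.ne_bot_iff_exists.1 hvbot
  refine ⟨D, ?_, ?_⟩
  · have : (0 : WithBot ℝ) ≤ v := le_sup_right
    rw [← hD] at this
    exact_mod_cast this
  · intro i j
    have h1 : X i j ≤ v := le_trans (Finset.le_sup (f := fun p : Fin n × Fin n => X p.1 p.2)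
      (Finset.mem_univ (i, j))) le_sup_left
    rwa [hD]

lemma sW_bounded (hlam : IsMaxCycleMean A lam) :
    ∃ K : ℝ, ∀ (t : ℕ) (f : ℕ → Fin n), sW (shiftMat A (-lam)) f t ≤ ((K:ℝ) : WithBot ℝ) := by
  obtain ⟨D, hD0, hD⟩ := matrix_bound (shiftMat A (-lam))
  refine ⟨n * D, ?_⟩
  intro t
  induction t using Nat.strong_induction_on with
  | _ t ih =>
    intro f
    rcases Nat.lt_or_ge t (n + 1) with hsmall|hbig
    · calc sW (shiftMat A (-lam)) f t ≤ ((t * D : ℝ) : WithBot ℝ) :=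
            sW_le_const fun s _ => hD (f s) (f (s+1))
        _ ≤ ((n * D : ℝ) : WithBot ℝ) := by
            rw [WithBot.coe_le_coe]
            have ht : (t : ℝ) ≤ n := by exact_mod_cast Nat.lt_succ_iff.1 hsmall
            nlinarith
    · -- pigeonhole: a repeat within the first n+1 nodes
      obtain ⟨x, y, hxy, hfeq⟩ := Fintype.exists_ne_map_eq_of_card_lt
        (fun s : Fin (n+1) => f s.1) (by simp)
      have hwlog : ∃ s s' : ℕ, s < s' ∧ s' ≤ n ∧ f s = f s' := by
        rcases Nat.lt_or_ge x.1 y.1 with h|h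
        · exact ⟨x.1, y.1, h, Nat.lt_succ_iff.1 y.2, hfeq⟩
        · have hlt : y.1 < x.1 := by
            rcases Nat.lt_or_ge y.1 x.1 with h2|h2
            · exact h2
            · exact absurd (Fin.ext (by omega)) hxy
          exact ⟨y.1, x.1, hlt, Nat.lt_succ_iff.1 x.2, hfeq.symm⟩
      obtain ⟨s, s', hss, hs'n, heq⟩ := hwlog
      have hs't : s' ≤ t := by omega
      rw [sW_split_cycle (shiftMat A (-lam)) hss hs't heq]
      have hinner : sW (shiftMat A (-lam)) (fun r => f (s + r)) (s' - s) ≤ 0 := by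
        apply closed_walk_nonpos A lam hlam
        show f (s + (s' - s)) = f (s + 0)
        rw [show s + (s' - s) = s' by omega, Nat.add_zero, heq]
      have houter := ih (s + (t - s')) (by omega) (scat f s (fun r => f (s' + r)))
      calc sW (shiftMat A (-lam)) (scat f s (fun r => f (s' + r))) (s + (t - s'))
            + sW (shiftMat A (-lam)) (fun r => f (s + r)) (s' - s)
          ≤ ((n * D : ℝ) : WithBot ℝ) + 0 := add_le_add houter hinner
        _ = ((n * D : ℝ) : WithBot ℝ) := add_zero _

lemma pow_bounded (hlam : IsMaxCycleMean A lam) :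
    ∃ K : ℝ, ∀ (t : ℕ) (i j : Fin n), mpPow (shiftMat A (-lam)) t i j ≤ ((K:ℝ) : WithBot ℝ) := by
  obtain ⟨K, hK⟩ := sW_bounded A lam hlam
  refine ⟨K ⊔ 0, ?_⟩
  intro t i j
  rcases pow_attained (shiftMat A (-lam)) t i j with hb | ⟨f, _, _, hw⟩
  · rw [hb]; exact bot_le
  · rw [← hw]
    calc sW (shiftMat A (-lam)) f t ≤ ((K:ℝ) : WithBot ℝ) := hK t f
      _ ≤ (((K ⊔ 0 : ℝ)) : WithBot ℝ) := by
          rw [WithBot.coe_le_coe]; exact le_sup_left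

end MaxPlus
end SecF
section SecF2
namespace MaxPlus
variable {n : ℕ} (A : MPMat n) (lam : ℝ)

lemma window_sum (H : ℕ → ℝ) (m : ℕ) (hper : ∀ j, H (j + m) = H j) (a : ℕ) :
    ∑ r ∈ Finset.range m, H (a + r) = ∑ j ∈ Finset.range m, H j := by
  induction a with
  | zero => simp
  | succ a ih =>
    rw [← ih]
    have h1 : ∑ r ∈ Finset.range m, H (a + 1 + r) = ∑ r ∈ Finset.range m, H (a + (r+1)) := by
      apply Finset.sum_congr rfl
      intros r _
      congr 1
      omega
    have h2 : ∑ r ∈ Finset.range (m+1), H (a + r)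
        = (∑ r ∈ Finset.range m, H (a + (r+1))) + H (a + 0) := Finset.sum_range_succ' _ m
    have h3 : ∑ r ∈ Finset.range (m+1), H (a + r)
        = (∑ r ∈ Finset.range m, H (a + r)) + H (a + m) := Finset.sum_range_succ _ m
    have h4 : H (a + m) = H (a + 0) := by rw [hper (a)]; simp
    rw [h1]
    linarith [h2, h3, h4]

lemma crit_edge_complement {u v : Fin n} (h : critEdges A lam u v) :
    ∃ (g : ℕ → Fin n) (ℓ : ℕ), SWalk (critSub A lam) g ℓ ∧ g 0 = v ∧ g ℓ = u ∧
      sW (shiftMat A (-lam)) g ℓ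
        = ((- ((shiftMat A (-lam) u v).unbotD 0) : ℝ) : WithBot ℝ) := by
  obtain ⟨f, m, s, h1, hs, hfs, hfs1, hcl, hedge, hnode, hsWA⟩ := critEdge_seq A lam h
  set B := shiftMat A (-lam) with hB
  set br : Fin n → Fin n → ℝ := fun i j => (B i j).unbotD 0 with hbr
  have hswalk : SWalk (critSub A lam) f m := ⟨fun r hr => hnode r hr, fun r hr => hedge r hr⟩
  have hBedge : ∀ r < m, B (f r) (f (r+1)) ≠ ⊥ := by
    intro r hr
    rw [hB, Ne, shift_bot_iff]
    exact critEdges_ne_bot A lam (hedge r hr)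
  have hsWB : sW B f m = ((0:ℝ) : WithBot ℝ) := by
    rw [hB, sW_shift, hsWA, ← WithBot.coe_add]
    congr 1
    ring
  have hrW : rW B f m = 0 := by
    have := sW_eq_coe hBedge
    rw [hsWB] at this
    exact_mod_cast this.symm
  set g : ℕ → Fin n := fun r => f ((s + 1 + r) % m) with hg
  set ℓ := m - 1 with hℓ
  have hgw : SWalk (critSub A lam) g ℓ := SWalk_mod h1 hcl hswalk (s+1) ℓ
  have hg0 : g 0 = v := by
    rw [hg]
    show f ((s + 1 + 0) % m) = v
    rw [Nat.add_zero]
    by_cases hsm : s + 1 = m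
    · rw [hsm, Nat.mod_self, ← hcl, ← hfs1, hsm]
    · rw [Nat.mod_eq_of_lt (by omega), hfs1]
  have hgl : g ℓ = u := by
    rw [hg]
    show f ((s + 1 + ℓ) % m) = u
    rw [hℓ, show s + 1 + (m - 1) = s + m by omega, Nat.add_mod_right,
      Nat.mod_eq_of_lt hs, hfs]
  refine ⟨g, ℓ, hgw, hg0, hgl, ?_⟩
  have hgedge : ∀ r < ℓ, B (g r) (g (r+1)) ≠ ⊥ := by
    intro r hr
    rw [hB, Ne, shift_bot_iff]
    exact critEdges_ne_bot A lam (hgw.2 r hr)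
  rw [sW_eq_coe hgedge]
  congr 1
  -- real computation
  set H : ℕ → ℝ := fun j => br (f (j % m)) (f (j % m + 1)) with hH
  have hper : ∀ j, H (j + m) = H j := by
    intro j
    rw [hH]
    simp only [Nat.add_mod_right]
  have hstep : ∀ r, br (g r) (g (r+1)) = H (s + 1 + r) := by
    intro r
    rw [hH, hg]
    show br (f ((s+1+r) % m)) (f ((s+1+(r+1)) % m)) = _
    have : f ((s+1+(r+1)) % m) = f ((s+1+r) % m + 1) := by
      rw [show s+1+(r+1) = (s+1+r)+1 by omega]
      exact periodic_step h1 hcl (s+1+r)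
    rw [this]
  have hfull : ∑ j ∈ Finset.range m, H j = 0 := by
    rw [← hrW]
    apply Finset.sum_congr rfl
    intro j hj
    rw [Finset.mem_range] at hj
    rw [hH]
    simp only [Nat.mod_eq_of_lt hj]
    rfl
  have hwin : ∑ r ∈ Finset.range m, H (s + 1 + r) = 0 := by
    rw [window_sum H m hper (s+1), hfull]
  have hm' : m = ℓ + 1 := by omega
  have hsplit : ∑ r ∈ Finset.range m, H (s + 1 + r)
      = (∑ r ∈ Finset.range ℓ, H (s + 1 + r)) + H (s + 1 + ℓ) := by
    rw [hm']
    exact Finset.sum_range_succ _ ℓ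
  have hlast : H (s + 1 + ℓ) = br u v := by
    rw [show s + 1 + ℓ = s + m by omega, hper s, hH]
    simp only [Nat.mod_eq_of_lt hs]
    rw [hfs, hfs1]
  have hsum : ∑ r ∈ Finset.range ℓ, H (s + 1 + r) = - br u v := by
    rw [hsplit, hlast] at hwin
    linarith
  rw [rW]
  calc ∑ r ∈ Finset.range ℓ, (B (g r) (g (r+1))).unbotD 0
      = ∑ r ∈ Finset.range ℓ, H (s + 1 + r) := by
        apply Finset.sum_congr rfl
        intro r _
        exact hstep r
    _ = - br u v := hsum

lemma crit_reverse_walk : ∀ (t : ℕ) (f : ℕ → Fin n), 1 ≤ t →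
    (∀ s < t, critEdges A lam (f s) (f (s+1))) →
    ∃ (g : ℕ → Fin n) (ℓ : ℕ), SWalk (critSub A lam) g ℓ ∧ g 0 = f t ∧ g ℓ = f 0 ∧
      sW (shiftMat A (-lam)) g ℓ
        = ((- rW (shiftMat A (-lam)) f t : ℝ) : WithBot ℝ) := by
  intro t
  induction t with
  | zero => intro f h; omega
  | succ t ih =>
    intro f _ hedge
    rcases Nat.eq_zero_or_pos t with ht0 | htpos
    · subst ht0
      obtain ⟨g, ℓ, hgw, hg0, hgl, hgweight⟩ := crit_edge_complement A lam (hedge 0 (by omega))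
      refine ⟨g, ℓ, hgw, hg0, hgl, ?_⟩
      rw [hgweight]
      congr 1
      rw [rW]
      simp
    · obtain ⟨g1, ℓ1, hg1w, hg10, hg1l, hg1weight⟩ :=
        crit_edge_complement A lam (hedge t (by omega))
      obtain ⟨g2, ℓ2, hg2w, hg20, hg2l, hg2weight⟩ := ih f htpos (fun s hs => hedge s (by omega))
      have hmeet : g1 ℓ1 = g2 0 := by rw [hg1l, hg20]
      refine ⟨scat g1 ℓ1 g2, ℓ1 + ℓ2, hg1w.scat hg2w hmeet, ?_, ?_, ?_⟩
      · rw [scat_left (Nat.zero_le ℓ1), hg10]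
      · rw [scat_right hmeet ℓ2, hg2l]
      · rw [sW_scat _ hmeet ℓ2, hg1weight, hg2weight, ← WithBot.coe_add]
        congr 1
        have : rW (shiftMat A (-lam)) f (t+1)
            = rW (shiftMat A (-lam)) f t + ((shiftMat A (-lam) (f t) (f (t+1))).unbotD 0) := by
          rw [rW, rW, Finset.sum_range_succ]
        rw [this]
        ring

lemma crit_closed_zero (hlam : IsMaxCycleMean A lam) (t : ℕ) (f : ℕ → Fin n)
    (hedge : ∀ s < t, critEdges A lam (f s) (f (s+1))) (hc : f t = f 0) :
    sW (shiftMat A (-lam)) f t = (0 : WithBot ℝ) := by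
  rcases Nat.eq_zero_or_pos t with h0 | hpos
  · subst h0; exact sW_zero _ f
  have hBedge : ∀ s < t, shiftMat A (-lam) (f s) (f (s+1)) ≠ ⊥ := by
    intro s hs
    rw [Ne, shift_bot_iff]
    exact critEdges_ne_bot A lam (hedge s hs)
  have hle : sW (shiftMat A (-lam)) f t ≤ 0 := closed_walk_nonpos A lam hlam t f hc
  obtain ⟨g, ℓ, hgw, hg0, hgl, hgweight⟩ := crit_reverse_walk A lam t f hpos hedge
  have hgclosed : g ℓ = g 0 := by rw [hgl, hg0, hc]
  have hgle : sW (shiftMat A (-lam)) g ℓ ≤ 0 := closed_walk_nonpos A lam hlam ℓ g hgclosed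
  rw [hgweight] at hgle
  have h0le : (0:ℝ) ≤ rW (shiftMat A (-lam)) f t := by
    have := hgle
    rw [show (0 : WithBot ℝ) = ((0:ℝ) : WithBot ℝ) from rfl, WithBot.coe_le_coe] at this
    linarith
  rw [sW_eq_coe hBedge] at hle ⊢
  rw [show (0 : WithBot ℝ) = ((0:ℝ) : WithBot ℝ) from rfl, WithBot.coe_le_coe] at hle
  rw [show (0 : WithBot ℝ) = ((0:ℝ) : WithBot ℝ) from rfl, WithBot.coe_inj]
  linarith

end MaxPlus
end SecF2
section SecG
namespace MaxPlus
variable {n : ℕ}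

lemma sW_congr_entries {X Y : MPMat n} {f : ℕ → Fin n} {t : ℕ}
    (h : ∀ s < t, X (f s) (f (s+1)) = Y (f s) (f (s+1))) : sW X f t = sW Y f t :=
  Finset.sum_congr rfl fun s hs => h s (Finset.mem_range.1 hs)

lemma csr_entry (A' : MPMat n) (lam : ℝ) (G : SubD n) (t : ℕ) (i j : Fin n) :
    csr A' lam G t i j = Finset.univ.sup fun q =>
      (Finset.univ.sup fun k => csrC A' lam G i k + mpPow (csrS A' lam G) t k q)
        + csrR A' lam G q j := rfl

lemma le_csr {A' : MPMat n} {lam : ℝ} {G : SubD n} {t : ℕ} {i j k q : Fin n} {x : WithBot ℝ}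
    (hx : x ≤ csrC A' lam G i k + mpPow (csrS A' lam G) t k q + csrR A' lam G q j) :
    x ≤ csr A' lam G t i j := by
  rw [csr_entry]
  refine hx.trans (le_trans (add_le_add_left ?_ _)
    (Finset.le_sup (f := fun q => (Finset.univ.sup fun k =>
      csrC A' lam G i k + mpPow (csrS A' lam G) t k q) + csrR A' lam G q j)
      (Finset.mem_univ q)))
  exact Finset.le_sup (f := fun k => csrC A' lam G i k + mpPow (csrS A' lam G) t k q)
    (Finset.mem_univ k)

lemma csr_le {A' : MPMat n} {lam : ℝ} {G : SubD n} {t : ℕ} {i j : Fin n} {L : WithBot ℝ}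
    (h : ∀ k q, csrC A' lam G i k + mpPow (csrS A' lam G) t k q + csrR A' lam G q j ≤ L) :
    csr A' lam G t i j ≤ L := by
  rw [csr_entry]
  apply Finset.sup_le
  intro q _
  apply finsetSup_add_le
  intro k _
  exact h k q

lemma pow_pow_le_pow (X : MPMat n) (γ m : ℕ) (i j : Fin n) :
    mpPow (mpPow X γ) m i j ≤ mpPow X (γ * m) i j := by
  rcases pow_pow_attained X γ m i j with h|⟨f, h0, h1, hw⟩
  · rw [h]; exact bot_le
  · rw [← hw]; exact sW_le_pow X _ f i j h0 h1

lemma pad_mod (γ a : ℕ) (hγ : 0 < γ) : γ ∣ (a + (γ - a % γ) % γ) := by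
  set ρ := a % γ with hρ
  have h1 : γ * (a / γ) + ρ = a := Nat.div_add_mod a γ
  have hρlt : ρ < γ := Nat.mod_lt _ hγ
  by_cases h : ρ = 0
  · rw [h, Nat.sub_zero, Nat.mod_self, Nat.add_zero]
    exact Nat.dvd_of_mod_eq_zero h
  · rw [Nat.mod_eq_of_lt (by omega)]
    refine ⟨a / γ + 1, ?_⟩
    have h3 : γ * (a / γ + 1) = γ * (a / γ) + γ := by ring
    omega

lemma choose_padding (γ γk ℓ N : ℕ) (hγpos : 0 < γ) (hdvd : γk ∣ γ) (hdl : γk ∣ ℓ) :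
    ∃ z, γk ∣ z ∧ N ≤ z ∧ γ ∣ (ℓ + z) := by
  set ρ := ℓ % γ with hρ
  have h1 : γ * (ℓ / γ) + ρ = ℓ := Nat.div_add_mod ℓ γ
  have hρlt : ρ < γ := Nat.mod_lt _ hγpos
  have hkρ : γk ∣ ρ := by
    have h2 : ρ = ℓ - γ * (ℓ / γ) := by omega
    rw [h2]
    exact Nat.dvd_sub hdl (hdvd.mul_right _)
  refine ⟨(γ - ρ) % γ + γ * (N + 1), ?_, ?_, ?_⟩
  · apply Nat.dvd_add
    · by_cases h : ρ = 0
      · rw [h, Nat.sub_zero, Nat.mod_self]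
        exact dvd_zero γk
      · rw [Nat.mod_eq_of_lt (by omega)]
        exact Nat.dvd_sub hdvd hkρ
    · exact hdvd.mul_right _
  · have : N + 1 ≤ γ * (N+1) := by nlinarith
    omega
  · have hstep : γ ∣ ℓ + (γ - ρ) % γ := by
      have := pad_mod γ ℓ hγpos
      rwa [← hρ] at this
    have hassoc : ℓ + ((γ - ρ) % γ + γ * (N + 1)) = (ℓ + (γ - ρ) % γ) + γ * (N + 1) := by omega
    rw [hassoc]
    exact Nat.dvd_add hstep (Dvd.dvd.mul_right (dvd_refl γ) _)

end MaxPlus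
end SecG
section SecH
namespace MaxPlus
variable {n : ℕ}

lemma dir_ge_gen (A : MPMat n) (lam : ℝ) (hlam : IsMaxCycleMean A lam) (x : Fin n)
    (hx : x ∈ critNodes A lam) (Z : Set (Fin n))
    (hZdisj : ∀ w ∈ sccOf (critSub A lam) x, w ∉ Z)
    (t : ℕ) (i j : Fin n) :
    csr (zeroRC A Z) lam (sccSub (critSub A lam) x) t i j
      ≤ csr A lam (critSub A lam) t i j := by
  classical
  obtain ⟨K, hK⟩ := pow_bounded A lam hlam
  set B := shiftMat A (-lam) with hB
  set Aν := zeroRC A Z with hAν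
  set Bν := shiftMat Aν (-lam) with hBν
  set Gν := sccSub (critSub A lam) x with hGν
  set γ := graphCyclicity (critSub A lam) with hγ
  set γν := graphCyclicity Gν with hγν
  have hγν_eq : γν = sccCyclicity (critSub A lam) x := graphCyclicity_sccSub A lam hx
  have hγpos : 0 < γ := (sccCyclicity_dvd_graphCyclicity A lam hx).2
  have hBle : ∀ a b, Bν a b ≤ B a b := by
    intro a b
    apply add_le_add_left
    rw [hAν, zeroRC]
    split
    · exact bot_le
    · exact le_refl _
  have hbdd : ∀ (X : MPMat n), (∀ a b, X a b ≤ B a b) → ∀ (γ0 : ℕ) (a b : Fin n),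
      BddAbove (Set.range fun m => mpPow (mpPow X γ0) m a b) := by
    rintro X hX γ0 a b
    refine ⟨((K : ℝ) : WithBot ℝ), ?_⟩
    rintro v ⟨m, rfl⟩
    exact le_trans (pow_pow_le_pow X γ0 m a b) (le_trans (pow_mono hX _ a b) (hK _ a b))
  have hSν_eq_B : ∀ a b, Gν.edge a b → csrS Aν lam Gν a b = B a b := by
    intro a b h
    rw [csrS, if_pos h]
    show Aν a b + _ = A a b + _
    congr 1
    rw [hAν, zeroRC, if_neg]
    push_neg
    exact ⟨hZdisj a h.2.1, hZdisj b h.2.2⟩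
  apply csr_le
  intro k q
  by_cases hk : k ∈ Gν.verts
  swap
  · rw [csrC, if_neg hk, WithBot.bot_add, WithBot.bot_add]; exact bot_le
  by_cases hq : q ∈ Gν.verts
  swap
  · rw [csrR, if_neg hq, WithBot.add_bot]; exact bot_le
  rw [csrC, if_pos hk, csrR, if_pos hq]
  show mpStar (mpPow Bν γν) i k + _ + mpStar (mpPow Bν γν) q j ≤ _
  rw [mpStar]
  show (⨆ m, mpPow (mpPow Bν γν) m i k) + _ + (⨆ m, mpPow (mpPow Bν γν) m q j) ≤ _
  apply csum3
  intro m1 m2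
  rcases pow_pow_attained Bν γν m1 i k with h1b | ⟨f1, hf10, hf1t, hf1w⟩
  · rw [h1b, WithBot.bot_add, WithBot.bot_add]; exact bot_le
  rcases pow_attained (csrS Aν lam Gν) t k q with h2b | ⟨g, hg0, hgt, hgw⟩
  · rw [h2b, WithBot.add_bot, WithBot.bot_add]; exact bot_le
  rcases pow_pow_attained Bν γν m2 q j with h3b | ⟨f2, hf20, hf2t, hf2w⟩
  · rw [h3b, WithBot.add_bot]; exact bot_le
  rw [← hf1w, ← hgw, ← hf2w]
  by_cases hgbot : sW (csrS Aν lam Gν) g t = ⊥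
  · rw [hgbot, WithBot.add_bot, WithBot.bot_add]; exact bot_le
  have hgedge : ∀ s < t, Gν.edge (g s) (g (s+1)) := by
    intro s hs
    have h := sW_ne_bot hgbot s hs
    by_contra hcon
    exact h (by rw [csrS, if_neg hcon])
  have hgB : sW (csrS Aν lam Gν) g t = sW B g t :=
    sW_congr_entries fun s hs => hSν_eq_B _ _ (hgedge s hs)
  have hkcrit : k ∈ critNodes A lam := sccOf_subset_crit A lam hk
  have hqcrit : q ∈ critNodes A lam := sccOf_subset_crit A lam hq
  -- first term
  have hC : sW Bν f1 (γν * m1) ≤ csrC A lam (critSub A lam) i k := by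
    have hcyck : sccCyclicity (critSub A lam) x = sccCyclicity (critSub A lam) k :=
      scc_cyc_const A lam hx hk
    obtain ⟨-, -, -, -, Nk, hNk⟩ := crit_cyc_facts A lam hkcrit
    obtain ⟨z1, hz1dvd, hz1N, hz1γ⟩ := choose_padding γ (sccCyclicity (critSub A lam) k)
      (γν * m1) Nk hγpos (sccCyclicity_dvd_graphCyclicity A lam hkcrit).1
      (by rw [← hcyck, ← hγν_eq]; exact Dvd.intro m1 rfl)
    obtain ⟨c1, hc1w, hc10, hc1z⟩ := hNk z1 hz1dvd hz1N
    obtain ⟨d1, hd1⟩ := hz1γ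
    have hmeet : f1 (γν * m1) = c1 0 := by rw [hf1t, hc10]
    have hc1weight : sW B c1 z1 = 0 := by
      apply crit_closed_zero A lam hlam z1 c1
      · intro s hs; exact hc1w.2 s hs
      · rw [hc1z, hc10]
    rw [csrC, if_pos (show k ∈ (critSub A lam).verts from hkcrit)]
    show _ ≤ mpStar (mpPow B γ) i k
    rw [mpStar]
    refine le_trans ?_ (le_ciSup (hbdd B (fun a b => le_refl _) γ i k) d1)
    have hW10 : scat f1 (γν * m1) c1 0 = i := by
      rw [scat_left (Nat.zero_le _), hf10]
    have hW1t : scat f1 (γν * m1) c1 (γ * d1) = k := by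
      rw [← hd1, scat_right hmeet z1, hc1z]
    calc sW Bν f1 (γν * m1) ≤ sW B f1 (γν * m1) := sW_mono hBle f1 _
      _ = sW B (scat f1 (γν * m1) c1) (γ * d1) := by
          rw [← hd1, sW_scat B hmeet z1, hc1weight, add_zero]
      _ ≤ mpPow (mpPow B γ) d1 i k := sW_le_pow_pow B γ d1 _ i k hW10 hW1t
  -- middle term
  have hmid : sW (csrS Aν lam Gν) g t ≤ mpPow (csrS A lam (critSub A lam)) t k q := by
    have hgS : sW (csrS Aν lam Gν) g t = sW (csrS A lam (critSub A lam)) g t := by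
      rw [hgB]
      apply sW_congr_entries
      intro s hs
      have hce : (critSub A lam).edge (g s) (g (s+1)) := (hgedge s hs).1
      rw [csrS, if_pos hce]
      rfl
    rw [hgS]
    exact sW_le_pow _ t g k q hg0 hgt
  -- last term
  have hR : sW Bν f2 (γν * m2) ≤ csrR A lam (critSub A lam) q j := by
    have hcycq : sccCyclicity (critSub A lam) x = sccCyclicity (critSub A lam) q :=
      scc_cyc_const A lam hx hq
    obtain ⟨-, -, -, -, Nq, hNq⟩ := crit_cyc_facts A lam hqcrit
    obtain ⟨z2, hz2dvd, hz2N, hz2γ⟩ := choose_padding γ (sccCyclicity (critSub A lam) q)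
      (γν * m2) Nq hγpos (sccCyclicity_dvd_graphCyclicity A lam hqcrit).1
      (by rw [← hcycq, ← hγν_eq]; exact Dvd.intro m2 rfl)
    obtain ⟨c2, hc2w, hc20, hc2z⟩ := hNq z2 hz2dvd hz2N
    have hz2γ' : γ ∣ z2 + γν * m2 := by rwa [Nat.add_comm] at hz2γ
    obtain ⟨d2, hd2⟩ := hz2γ'
    have hmeet : c2 z2 = f2 0 := by rw [hc2z, hf20]
    have hc2weight : sW B c2 z2 = 0 := by
      apply crit_closed_zero A lam hlam z2 c2
      · intro s hs; exact hc2w.2 s hs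
      · rw [hc2z, hc20]
    rw [csrR, if_pos (show q ∈ (critSub A lam).verts from hqcrit)]
    show _ ≤ mpStar (mpPow B γ) q j
    rw [mpStar]
    refine le_trans ?_ (le_ciSup (hbdd B (fun a b => le_refl _) γ q j) d2)
    have hW20 : scat c2 z2 f2 0 = q := by
      rw [scat_left (Nat.zero_le _), hc20]
    have hW2t : scat c2 z2 f2 (γ * d2) = j := by
      rw [← hd2, scat_right hmeet (γν * m2), hf2t]
    calc sW Bν f2 (γν * m2) ≤ sW B f2 (γν * m2) := sW_mono hBle f2 _
      _ = sW B (scat c2 z2 f2) (γ * d2) := by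
          rw [← hd2, sW_scat B hmeet (γν * m2), hc2weight, zero_add]
      _ ≤ mpPow (mpPow B γ) d2 q j := sW_le_pow_pow B γ d2 _ q j hW20 hW2t
  exact le_csr (add_le_add (add_le_add hC hmid) hR)

end MaxPlus
end SecH
section SecI
namespace MaxPlus
variable {n : ℕ}

lemma dir_le (A : MPMat n) (lam : ℝ) (hlam : IsMaxCycleMean A lam)
    (L : ℕ) (r : Fin L → Fin n) (hmem : ∀ ν, r ν ∈ critNodes A lam)
    (hinj : ∀ ν ν', SccEq (critSub A lam) (r ν) (r ν') → ν = ν')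
    (hcov : ∀ w ∈ critNodes A lam, ∃ ν, SccEq (critSub A lam) w (r ν))
    (t : ℕ) (i j : Fin n) :
    csr A lam (critSub A lam) t i j ≤ Finset.univ.sup (fun ν : Fin L =>
      csr (zeroRC A {w | ∃ k : Fin L, (k : ℕ) < (ν : ℕ) ∧ w ∈ sccOf (critSub A lam) (r k)})
        lam (sccSub (critSub A lam) (r ν)) t i j) := by
  classical
  obtain ⟨K, hK⟩ := pow_bounded A lam hlam
  set B := shiftMat A (-lam) with hB
  set γ := graphCyclicity (critSub A lam) with hγ
  apply csr_le
  intro k q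
  by_cases hk : k ∈ (critSub A lam).verts
  swap
  · rw [csrC, if_neg hk, WithBot.bot_add, WithBot.bot_add]; exact bot_le
  by_cases hq : q ∈ (critSub A lam).verts
  swap
  · rw [csrR, if_neg hq, WithBot.add_bot]; exact bot_le
  have hγpos : 0 < γ := (sccCyclicity_dvd_graphCyclicity A lam hk).2
  rw [csrC, if_pos hk, csrR, if_pos hq]
  show mpStar (mpPow B γ) i k + _ + mpStar (mpPow B γ) q j ≤ _
  rw [mpStar]
  show (⨆ m, mpPow (mpPow B γ) m i k) + _ + (⨆ m, mpPow (mpPow B γ) m q j) ≤ _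
  apply csum3
  intro m1 m2
  rcases pow_pow_attained B γ m1 i k with h1b | ⟨f1, hf10, hf1t, hf1w⟩
  · rw [h1b, WithBot.bot_add, WithBot.bot_add]; exact bot_le
  rcases pow_attained (csrS A lam (critSub A lam)) t k q with h2b | ⟨g, hg0, hgt, hgw⟩
  · rw [h2b, WithBot.add_bot, WithBot.bot_add]; exact bot_le
  rcases pow_pow_attained B γ m2 q j with h3b | ⟨f2, hf20, hf2t, hf2w⟩
  · rw [h3b, WithBot.add_bot]; exact bot_le
  rw [← hf1w, ← hgw, ← hf2w]
  by_cases hgbot : sW (csrS A lam (critSub A lam)) g t = ⊥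
  · rw [hgbot, WithBot.add_bot, WithBot.bot_add]; exact bot_le
  have hgedge : ∀ s < t, (critSub A lam).edge (g s) (g (s+1)) := by
    intro s hs
    have h := sW_ne_bot hgbot s hs
    by_contra hcon
    exact h (by rw [csrS, if_neg hcon])
  have hgB : sW (csrS A lam (critSub A lam)) g t = sW B g t := by
    apply sW_congr_entries
    intro s hs
    rw [csrS, if_pos (hgedge s hs)]
    rfl
  rw [hgB]
  -- the whole walk W : i → j
  set ℓ1 := γ * m1 with hℓ1
  set ℓ2 := γ * m2 with hℓ2
  set T0 := ℓ1 + (t + ℓ2) with hT0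
  have hmeet2 : g t = f2 0 := by rw [hgt, hf20]
  have hmeet1 : f1 ℓ1 = scat g t f2 0 := by
    rw [scat_left (Nat.zero_le t), hf1t, hg0]
  set W := scat f1 ℓ1 (scat g t f2) with hW
  have hWsplit : sW B W T0 = sW B f1 ℓ1 + (sW B g t + sW B f2 ℓ2) := by
    rw [hW, hT0, sW_scat B hmeet1 (t + ℓ2), sW_scat B hmeet2 ℓ2]
  have hW0 : W 0 = i := by rw [hW, scat_left (Nat.zero_le ℓ1), hf10]
  have hWl1 : W ℓ1 = k := by
    have h := scat_right hmeet1 0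
    rw [Nat.add_zero] at h
    rw [hW, h, scat_left (Nat.zero_le t), hg0]
  have hWT0 : W T0 = j := by
    rw [hW, hT0, scat_right hmeet1 (t + ℓ2), scat_right hmeet2 ℓ2, hf2t]
  -- choose the minimal visited component
  obtain ⟨ν₀, hν₀⟩ := hcov k hk
  set V : Finset (Fin L) :=
    Finset.univ.filter (fun ν' => ∃ s ≤ T0, W s ∈ sccOf (critSub A lam) (r ν')) with hV
  have hν₀V : ν₀ ∈ V := by
    rw [hV, Finset.mem_filter]
    refine ⟨Finset.mem_univ _, ℓ1, by omega, ?_⟩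
    rw [hWl1]
    exact sccEq_symm hν₀
  set ν := V.min' ⟨ν₀, hν₀V⟩ with hν
  have hνV : ν ∈ V := Finset.min'_mem V _
  rw [hV, Finset.mem_filter] at hνV
  obtain ⟨-, s₀, hs₀T, hu⟩ := hνV
  set Z := {w : Fin n | ∃ k : Fin L, (k : ℕ) < (ν : ℕ) ∧ w ∈ sccOf (critSub A lam) (r k)}
    with hZ
  have havoidW : ∀ s ≤ T0, W s ∉ Z := by
    rintro s hs ⟨kk, hkkν, hmemkk⟩
    have hkkV : kk ∈ V := by
      rw [hV, Finset.mem_filter]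
      exact ⟨Finset.mem_univ _, s, hs, hmemkk⟩
    have hle := Finset.min'_le V kk hkkV
    rw [← hν] at hle
    have : (ν : ℕ) ≤ (kk : ℕ) := hle
    omega
  have hdisj : ∀ w ∈ sccOf (critSub A lam) (r ν), w ∉ Z := by
    rintro w hw ⟨kk, hkkν, hmemkk⟩
    have : kk = ν := hinj kk ν (sccEq_trans hmemkk (sccEq_symm hw))
    omega
  set Aν := zeroRC A Z with hAν
  set Bν := shiftMat Aν (-lam) with hBν
  set Gν := sccSub (critSub A lam) (r ν) with hGν
  set γν := graphCyclicity Gν with hγν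
  have hγν_eq : γν = sccCyclicity (critSub A lam) (r ν) := graphCyclicity_sccSub A lam (hmem ν)
  have hγνpos : 0 < γν := by
    rw [hγν_eq]; exact (crit_cyc_facts A lam (hmem ν)).2.2.1
  have hγν_dvd : γν ∣ γ := by
    rw [hγν_eq]; exact (sccCyclicity_dvd_graphCyclicity A lam (hmem ν)).1
  have hBeq : ∀ a b : Fin n, a ∉ Z → b ∉ Z → Bν a b = B a b := by
    intro a b ha hb
    show Aν a b + _ = A a b + _
    congr 1
    rw [hAν, zeroRC, if_neg]
    push_neg
    exact ⟨ha, hb⟩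
  have hBleν : ∀ a b, Bν a b ≤ B a b := by
    intro a b
    apply add_le_add_left
    rw [hAν, zeroRC]
    split
    · exact bot_le
    · exact le_refl _
  have hbddν : ∀ (a b : Fin n), BddAbove (Set.range fun m => mpPow (mpPow Bν γν) m a b) := by
    intro a b
    refine ⟨((K : ℝ) : WithBot ℝ), ?_⟩
    rintro v ⟨m, rfl⟩
    exact le_trans (pow_pow_le_pow Bν γν m a b) (le_trans (pow_mono hBleν _ a b) (hK _ a b))
  have hSν_eq_B : ∀ a b : Fin n, Gν.edge a b → csrS Aν lam Gν a b = B a b := by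
    intro a b h
    rw [csrS, if_pos h]
    show Aν a b + _ = A a b + _
    congr 1
    rw [hAν, zeroRC, if_neg]
    push_neg
    exact ⟨hdisj a h.2.1, hdisj b h.2.2⟩
  -- rerouting walks
  have huscc : W s₀ ∈ sccOf (critSub A lam) (r ν) := hu
  have hucrit : W s₀ ∈ critNodes A lam := sccOf_subset_crit A lam huscc
  set z1 := (γν - s₀ % γν) % γν with hz1
  have hdvd_az1 : γν ∣ s₀ + z1 := pad_mod γν s₀ hγνpos
  obtain ⟨Q1, hQ1w, hQ10⟩ := scc_walk_any_length A lam huscc z1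
  set k1 := Q1 z1 with hk1
  have hk1scc : k1 ∈ sccOf (critSub A lam) (r ν) := hQ1w.1 z1 (le_refl z1)
  obtain ⟨Q2, hQ2w, hQ20⟩ := scc_walk_any_length A lam hk1scc t
  set k2 := Q2 t with hk2
  have hk2scc : k2 ∈ sccOf (critSub A lam) (r ν) := hQ2w.1 t (le_refl t)
  obtain ⟨c0, R0, hR0w, hR00, hR0c⟩ :=
    reachIn_iff.1 (sccEq_trans (sccEq_symm hk2scc) huscc).1
  have hR0scc : SWalk Gν R0 c0 := walk_in_scc A lam hR0w (hR00 ▸ hk2scc) (hR0c ▸ huscc)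
  have hcycu : sccCyclicity (critSub A lam) (W s₀) = γν := by
    rw [hγν_eq]
    exact (scc_cyc_const A lam (hmem ν) huscc).symm
  obtain ⟨hdvdall_u, -, -, -, Nu, hNu⟩ := crit_cyc_facts A lam hucrit
  set w3 := γν * (Nu + 1) with hw3
  obtain ⟨c3, hc3w, hc30, hc3z⟩ := hNu w3
    (by rw [hcycu]; exact Dvd.intro _ rfl)
    (by rw [hw3]; nlinarith [hγνpos])
  have hc3scc : SWalk Gν c3 w3 := walk_in_scc A lam hc3w (hc30 ▸ huscc) (hc3z ▸ huscc)
  -- closed walk divisibility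
  have hmQ12 : Q1 z1 = Q2 0 := by rw [hQ20]
  have hmQ2R : Q2 t = R0 0 := by rw [hR00]
  have hmR0c3 : R0 c0 = c3 0 := by rw [hR0c, hc30]
  have hclosed1 : γν ∣ z1 + (t + c0) := by
    rw [← hcycu]
    apply hdvdall_u (z1 + (t + c0)) (scat Q1 z1 (scat Q2 t R0))
    · apply swalk_scc_to_crit A lam
      apply hQ1w.scat (hQ2w.scat (hR0scc) hmQ2R)
      rw [scat_left (Nat.zero_le t), hmQ12]
    · rw [scat_left (Nat.zero_le z1), hQ10]
    · rw [scat_right (by rw [scat_left (Nat.zero_le t), hmQ12]) (t + c0),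
        scat_right hmQ2R c0, hR0c]
  have hdvd3 : γν ∣ (c0 + w3) + (T0 - s₀) := by
    obtain ⟨e2, he2⟩ := hclosed1
    obtain ⟨e4, he4⟩ := hγν_dvd
    have h5 : ℓ1 = γν * (e4 * m1) := by rw [hℓ1, he4]; ring
    have h6 : ℓ2 = γν * (e4 * m2) := by rw [hℓ2, he4]; ring
    obtain ⟨e1, he1⟩ := hdvd_az1
    have heq : (c0 + w3) + (T0 - s₀) + (s₀ + z1)
        = (z1 + (t + c0)) + w3 + (ℓ1 + ℓ2) := by
      rw [hT0] at hs₀T ⊢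
      omega
    have hsum : γν ∣ (c0 + w3) + (T0 - s₀) + (s₀ + z1) := by
      rw [heq]
      refine Nat.dvd_add (Nat.dvd_add ⟨e2, he2⟩ ⟨Nu + 1, hw3⟩) ?_
      rw [h5, h6]
      exact Nat.dvd_add ⟨e4 * m1, rfl⟩ ⟨e4 * m2, rfl⟩
    have hfin := Nat.dvd_sub hsum ⟨e1, he1⟩
    rwa [show (c0 + w3) + (T0 - s₀) + (s₀ + z1) - (s₀ + z1) = (c0 + w3) + (T0 - s₀) by omega]
      at hfin
  -- weight bookkeeping
  set Wsuf := fun r0 => W (s₀ + r0) with hWsuf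
  have hWsuf0 : Wsuf 0 = W s₀ := rfl
  have hval : sW B f1 ℓ1 + sW B g t + sW B f2 ℓ2
      = sW B W s₀ + sW B Wsuf (T0 - s₀) := by
    have h1 : sW B W T0 = sW B W s₀ + sW B Wsuf (T0 - s₀) := by
      have h2 := sW_add B W s₀ (T0 - s₀)
      rw [show s₀ + (T0 - s₀) = T0 by omega] at h2
      exact h2
    rw [← h1, hWsplit, add_assoc]
  have hpre : sW Bν W s₀ = sW B W s₀ :=
    sW_congr_entries fun s hs => hBeq _ _ (havoidW s (by omega)) (havoidW (s+1) (by omega))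
  have hsuf : sW Bν Wsuf (T0 - s₀) = sW B Wsuf (T0 - s₀) :=
    sW_congr_entries fun s hs =>
      hBeq _ _ (havoidW (s₀ + s) (by omega)) (havoidW (s₀ + (s+1)) (by omega))
  have hQ1nZ : ∀ s ≤ z1, Q1 s ∉ Z := fun s hs => hdisj _ (hQ1w.1 s hs)
  have hQ1B : sW Bν Q1 z1 = sW B Q1 z1 :=
    sW_congr_entries fun s hs => hBeq _ _ (hQ1nZ s (by omega)) (hQ1nZ (s+1) hs)
  have hR0nZ : ∀ s ≤ c0, R0 s ∉ Z := fun s hs => hdisj _ (hR0scc.1 s hs)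
  have hR0B : sW Bν R0 c0 = sW B R0 c0 :=
    sW_congr_entries fun s hs => hBeq _ _ (hR0nZ s (by omega)) (hR0nZ (s+1) hs)
  have hc3nZ : ∀ s ≤ w3, c3 s ∉ Z := fun s hs => hdisj _ (hc3scc.1 s hs)
  have hc3B : sW Bν c3 w3 = sW B c3 w3 :=
    sW_congr_entries fun s hs => hBeq _ _ (hc3nZ s (by omega)) (hc3nZ (s+1) hs)
  have hQ2S : sW (csrS Aν lam Gν) Q2 t = sW B Q2 t :=
    sW_congr_entries fun s hs => hSν_eq_B _ _ (hQ2w.2 s hs)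
  -- the inserted closed walk has weight 0
  have hmInner : Q2 t = scat R0 c0 c3 0 := by
    rw [scat_left (Nat.zero_le c0)]; exact hmQ2R
  have hmOuter : Q1 z1 = scat Q2 t (scat R0 c0 c3) 0 := by
    rw [scat_left (Nat.zero_le t)]; exact hmQ12
  have hInsW : SWalk (critSub A lam) (scat Q1 z1 (scat Q2 t (scat R0 c0 c3)))
      (z1 + (t + (c0 + w3))) :=
    swalk_scc_to_crit A lam
      (hQ1w.scat (hQ2w.scat (hR0scc.scat hc3scc hmR0c3) hmInner) hmOuter)
  have hInsZero : sW B (scat Q1 z1 (scat Q2 t (scat R0 c0 c3))) (z1 + (t + (c0 + w3))) = 0 := by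
    apply crit_closed_zero A lam hlam
    · intro s hs; exact hInsW.2 s hs
    · rw [scat_right hmOuter (t + (c0 + w3)), scat_right hmInner (c0 + w3),
        scat_right hmR0c3 w3, hc3z, scat_left (Nat.zero_le z1), hQ10]
  have hInsSum : sW B Q1 z1 + (sW B Q2 t + (sW B R0 c0 + sW B c3 w3)) = 0 := by
    rw [← hInsZero, sW_scat B hmOuter (t + (c0 + w3)), sW_scat B hmInner (c0 + w3),
      sW_scat B hmR0c3 w3]
  obtain ⟨e3, he3⟩ := hdvd3
  obtain ⟨e1, he1⟩ := hdvd_az1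
  set P1 := scat W s₀ Q1 with hP1
  have hmP1 : W s₀ = Q1 0 := hQ10.symm
  have hP1w : sW Bν P1 (s₀ + z1) = sW B W s₀ + sW B Q1 z1 := by
    rw [hP1, sW_scat Bν hmP1 z1, hpre, hQ1B]
  have hP10 : P1 0 = i := by rw [hP1, scat_left (Nat.zero_le s₀), hW0]
  have hP1t : P1 (γν * e1) = k1 := by
    rw [← he1, hP1, scat_right hmP1 z1, hk1]
  set P3 := scat (scat R0 c0 c3) (c0 + w3) Wsuf with hP3
  have hmP3 : scat R0 c0 c3 (c0 + w3) = Wsuf 0 := by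
    rw [scat_right hmR0c3 w3, hc3z]
    rfl
  have hP3w : sW Bν P3 ((c0 + w3) + (T0 - s₀))
      = (sW B R0 c0 + sW B c3 w3) + sW B Wsuf (T0 - s₀) := by
    rw [hP3, sW_scat Bν hmP3 (T0 - s₀), sW_scat Bν hmR0c3 w3, hR0B, hc3B, hsuf]
  have hP30 : P3 0 = k2 := by
    rw [hP3, scat_left (Nat.zero_le (c0 + w3)), scat_left (Nat.zero_le c0), hR00]
  have hP3t : P3 (γν * e3) = j := by
    rw [← he3, hP3, scat_right hmP3 (T0 - s₀)]
    show W (s₀ + (T0 - s₀)) = j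
    rw [show s₀ + (T0 - s₀) = T0 by omega, hWT0]
  have hCb : sW Bν P1 (s₀ + z1) ≤ csrC Aν lam Gν i k1 := by
    rw [csrC, if_pos (show k1 ∈ Gν.verts from hk1scc)]
    show _ ≤ mpStar (mpPow Bν γν) i k1
    rw [mpStar]
    refine le_trans ?_ (le_ciSup (hbddν i k1) e1)
    rw [he1]
    exact sW_le_pow_pow Bν γν e1 P1 i k1 hP10 hP1t
  have hQb : sW (csrS Aν lam Gν) Q2 t ≤ mpPow (csrS Aν lam Gν) t k1 k2 :=
    sW_le_pow _ t Q2 k1 k2 hQ20 hk2.symm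
  have hRb : sW Bν P3 ((c0 + w3) + (T0 - s₀)) ≤ csrR Aν lam Gν k2 j := by
    rw [csrR, if_pos (show k2 ∈ Gν.verts from hk2scc)]
    show _ ≤ mpStar (mpPow Bν γν) k2 j
    rw [mpStar]
    refine le_trans ?_ (le_ciSup (hbddν k2 j) e3)
    rw [he3]
    exact sW_le_pow_pow Bν γν e3 P3 k2 j hP30 hP3t
  have hfinal : sW B f1 ℓ1 + sW B g t + sW B f2 ℓ2
      ≤ csrC Aν lam Gν i k1 + mpPow (csrS Aν lam Gν) t k1 k2 + csrR Aν lam Gν k2 j := by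
    rw [hval]
    have hcomb : sW Bν P1 (s₀ + z1) + sW (csrS Aν lam Gν) Q2 t
          + sW Bν P3 ((c0 + w3) + (T0 - s₀))
        = sW B W s₀ + sW B Wsuf (T0 - s₀) := by
      rw [hP1w, hQ2S, hP3w]
      have habel : (sW B W s₀ + sW B Q1 z1) + sW B Q2 t
            + ((sW B R0 c0 + sW B c3 w3) + sW B Wsuf (T0 - s₀))
          = sW B W s₀ + (sW B Q1 z1 + (sW B Q2 t + (sW B R0 c0 + sW B c3 w3)))
            + sW B Wsuf (T0 - s₀) := by abel
      rw [habel, hInsSum, add_zero]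
    rw [← hcomb]
    exact add_le_add (add_le_add hCb hQb) hRb
  refine le_trans hfinal (le_trans (le_csr (le_refl _)) ?_)
  exact Finset.le_sup (f := fun ν : Fin L =>
      csr (zeroRC A {w | ∃ k : Fin L, (k : ℕ) < (ν : ℕ) ∧ w ∈ sccOf (critSub A lam) (r k)})
        lam (sccSub (critSub A lam) (r ν)) t i j) (Finset.mem_univ ν)

end MaxPlus
end SecI

namespace MaxPlus

/-- (CSR decomposition over the critical s.c.c.'s.)
If `𝒞_1, …, 𝒞_L` are the s.c.c.'s of `𝒞(A)` (given by representatives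
`r 1, …, r L`), and `A^{(ν)}` is obtained from `A` by zeroing out the rows and
columns of `𝒞_1 ∪ ⋯ ∪ 𝒞_{ν−1}`, then `CS^tR = ⊕_ν C_ν S_ν^t R_ν` where
`C_ν, S_ν, R_ν` are the CSR terms of `A^{(ν)}` w.r.t. `𝒞_ν` with normalization
`λ(A)`. -/
theorem csr_decomposition {n : ℕ} (A : MPMat n) (lam : ℝ)
    (hlam : IsMaxCycleMean A lam)
    (L : ℕ) (r : Fin L → Fin n)
    (hmem : ∀ ν, r ν ∈ critNodes A lam)
    (hinj : ∀ ν ν', SccEq (critSub A lam) (r ν) (r ν') → ν = ν')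
    (hcov : ∀ w ∈ critNodes A lam, ∃ ν, SccEq (critSub A lam) w (r ν)) :
    ∀ (t : ℕ) (i j : Fin n),
      csr A lam (critSub A lam) t i j =
        Finset.univ.sup (fun ν : Fin L =>
          csr (zeroRC A {w | ∃ k : Fin L, (k : ℕ) < (ν : ℕ) ∧ w ∈ sccOf (critSub A lam) (r k)})
            lam (sccSub (critSub A lam) (r ν)) t i j) := by
  intro t i j
  apply le_antisymm
  · exact dir_le A lam hlam L r hmem hinj hcov t i j
  · apply Finset.sup_le
    intro ν _
    apply dir_ge_gen A lam hlam (r ν) (hmem ν) _ ?_ t i j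
    rintro w hw ⟨kk, hkkν, hmemkk⟩
    have : kk = ν := hinj kk ν (sccEq_trans hmemkk (sccEq_symm hw))
    omega

end MaxPlus
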